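/- arXiv:1510.06057 — 2 statements merged into one kernel-verified Lean document; each statement's English description precedes it below -/
import Mathlib

section
/- For every n ≥ 6, the maximum number of edges of an n-vertex 3-graph that contains two disjoint edges and is free of P, of C, and of P_2 ∪ K_3 equals 2n − 4; that is, ex(n;{P, C, P_2 ∪ K_3}|M) = 2n − 4. -/
/-!
Common framework: 3-uniform hypergraphs (`3-graphs`) with vertex set a `Finset ℕ`,
copies/embeddings, isomorphism, connectivity, concrete 3-graphs from the paper,
and (higher order) Turán-extremality.
-/

structure ThreeGraph where
  verts : Finset ℕ
  edges : Finset (Finset ℕ)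
  sub : ∀ e ∈ edges, e ⊆ verts
  card3 : ∀ e ∈ edges, e.card = 3

namespace ThreeGraph

/-- The 3-graph on vertex set `V` whose edges are the 3-element subsets of `V`
satisfying the predicate `p`. -/
noncomputable def mk3 (V : Finset ℕ) (p : Finset ℕ → Prop) : ThreeGraph :=
  letI := Classical.decPred p
  { verts := V
    edges := (V.powersetCard 3).filter p
    sub := fun e he => (Finset.mem_powersetCard.mp (Finset.mem_filter.mp he).1).1
    card3 := fun e he => (Finset.mem_powersetCard.mp (Finset.mem_filter.mp he).1).2 }

/-- `H` contains a copy of `F` (i.e. a subhypergraph of `H` is isomorphic to `F`);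
equivalently, `F` embeds into `H`. -/
def HasCopy (F H : ThreeGraph) : Prop :=
  ∃ f : ℕ → ℕ, Set.InjOn f ↑F.verts ∧ (∀ v ∈ F.verts, f v ∈ H.verts) ∧
    ∀ e ∈ F.edges, e.image f ∈ H.edges

/-- `F` and `H` are isomorphic 3-graphs. -/
def Iso (F H : ThreeGraph) : Prop :=
  ∃ f : ℕ → ℕ, Set.InjOn f ↑F.verts ∧ F.verts.image f = H.verts ∧
    F.edges.image (fun e => e.image f) = H.edges

def Adj (H : ThreeGraph) (u v : ℕ) : Prop :=
  ∃ e ∈ H.edges, u ∈ e ∧ v ∈ e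

/-- Connectivity: any two vertices are joined by a walk
(consecutive vertices share an edge). -/
def Connected (H : ThreeGraph) : Prop :=
  ∀ u ∈ H.verts, ∀ v ∈ H.verts, Relation.ReflTransGen H.Adj u v

/-- `P`: the loose 3-uniform path of length three. -/
noncomputable def pathP : ThreeGraph :=
  mk3 (Finset.range 7) (fun e => e = {0,1,2} ∨ e = {2,3,4} ∨ e = {4,5,6})

/-- `C`: the triangle. -/
noncomputable def triC : ThreeGraph :=
  mk3 (Finset.range 6) (fun e => e = {0,1,2} ∨ e = {2,3,4} ∨ e = {4,5,0})

/-- `M`: a pair of disjoint edges. -/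
noncomputable def matchM : ThreeGraph :=
  mk3 (Finset.range 6) (fun e => e = {0,1,2} ∨ e = {3,4,5})

/-- `P₂`: a pair of edges sharing exactly one vertex. -/
noncomputable def path2 : ThreeGraph :=
  mk3 (Finset.range 5) (fun e => e = {0,1,2} ∨ e = {2,3,4})

/-- `P₂ ∪ K₃`. -/
noncomputable def p2K3 : ThreeGraph :=
  mk3 (Finset.range 8) (fun e => e = {0,1,2} ∨ e = {2,3,4} ∨ e = {5,6,7})

/-- `K_m`: the complete 3-graph on `m` vertices. -/
noncomputable def K (m : ℕ) : ThreeGraph := mk3 (Finset.range m) (fun _ => True)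

/-- `S_n`: the full star on `n` vertices, with center `0`. -/
noncomputable def starS (n : ℕ) : ThreeGraph := mk3 (Finset.range n) (fun e => 0 ∈ e)

/-- The comet `Co(n)`: `K₄` on `{0,1,2,3}` and the full star with center `0`
on `{0} ∪ {4,…,n-1}`. -/
noncomputable def comet (n : ℕ) : ThreeGraph :=
  mk3 (Finset.range n)
    (fun e => e ⊆ ({0,1,2,3} : Finset ℕ) ∨ (0 ∈ e ∧ ∀ v ∈ e, v = 0 ∨ 4 ≤ v))

/-- `G₁(n)` with `x,y,z = 0,1,2` and `v = 3`. -/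
noncomputable def G1 (n : ℕ) : ThreeGraph :=
  mk3 (Finset.range n)
    (fun e => e = {0,1,2} ∨ (3 ∈ e ∧ (e ∩ ({0,1,2} : Finset ℕ)).Nonempty))

/-- `G₂(n)` with `x,y,z = 0,1,2`. -/
noncomputable def G2 (n : ℕ) : ThreeGraph :=
  mk3 (Finset.range n)
    (fun e => e = {0,1,2} ∨ (e ∩ ({0,1,2} : Finset ℕ)).card = 2)

/-- `G₃(n)` with `x = 0`, `y₁,y₂ = 1,2`, `z₁,z₂ = 3,4`. -/
noncomputable def G3 (n : ℕ) : ThreeGraph :=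
  mk3 (Finset.range n)
    (fun e => (e ⊆ ({0,1,2,3,4} : Finset ℕ) ∧ e ≠ {1,2,3} ∧ e ≠ {1,2,4}) ∨
      (∃ v ∈ e, 5 ≤ v ∧ (e = {0,3,v} ∨ e = {0,4,v})))

/-- `K₅⁺²`: `K₅` on `{0,…,4}` with `a,b = 0,1`, `c,d = 5,6`. -/
noncomputable def K5plus2 : ThreeGraph :=
  mk3 (Finset.range 7)
    (fun e => e ⊆ ({0,1,2,3,4} : Finset ℕ) ∨ e = {0,1,5} ∨ e = {0,1,6})

/-- The rocket `Ro(n)`: the full star with center `x = 0` on `{0} ∪ {5,…,n-1}`,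
plus vertices `a,b,c,d = 1,2,3,4` and edges `{x,a,b}, {a,b,c}, {a,b,d}`. -/
noncomputable def rocket (n : ℕ) : ThreeGraph :=
  mk3 (Finset.range n)
    (fun e => (0 ∈ e ∧ ∀ v ∈ e, v = 0 ∨ 5 ≤ v) ∨ e = {0,1,2} ∨ e = {1,2,3} ∨ e = {1,2,4})

/-- `K₆ ∪ K₁`. -/
noncomputable def K6K1 : ThreeGraph :=
  mk3 (Finset.range 7) (fun e => e ⊆ Finset.range 6)

/-- `K₆ ∪ K_{n-6}`. -/
noncomputable def K6K (n : ℕ) : ThreeGraph :=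
  mk3 (Finset.range n) (fun e => e ⊆ Finset.range 6 ∨ ∀ v ∈ e, 6 ≤ v)

/-- `K₆ ∪ S_{n-6}` (star centered at `6`). -/
noncomputable def K6star (n : ℕ) : ThreeGraph :=
  mk3 (Finset.range n) (fun e => e ⊆ Finset.range 6 ∨ (6 ∈ e ∧ ∀ v ∈ e, 6 ≤ v))

/-- `K₄ ∪ S_{n-4}` (star centered at `4`). -/
noncomputable def K4star (n : ℕ) : ThreeGraph :=
  mk3 (Finset.range n) (fun e => e ⊆ Finset.range 4 ∨ (4 ∈ e ∧ ∀ v ∈ e, 4 ≤ v))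

/-- `K₆ ∪ K₆ ∪ K₁` (on 13 vertices). -/
noncomputable def K6K6K1 : ThreeGraph :=
  mk3 (Finset.range 13) (fun e => e ⊆ Finset.range 6 ∨ e ⊆ Finset.Ico 6 12)

/-- `2K₆ ∪ 2K₁` (on 14 vertices). -/
noncomputable def twoK6twoK1 : ThreeGraph :=
  mk3 (Finset.range 14) (fun e => e ⊆ Finset.range 6 ∨ e ⊆ Finset.Ico 6 12)

/-- `K₅ ∪ K₅`. -/
noncomputable def K5K5 : ThreeGraph :=
  mk3 (Finset.range 10) (fun e => e ⊆ Finset.range 5 ∨ ∀ v ∈ e, 5 ≤ v)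

/-- `K₆ ∪ G₁(7)` (with `G₁(7)` on `{6,…,12}`, `x,y,z = 6,7,8`, `v = 9`). -/
noncomputable def K6G1 : ThreeGraph :=
  mk3 (Finset.range 13)
    (fun e => e ⊆ Finset.range 6 ∨ ((∀ v ∈ e, 6 ≤ v) ∧
      (e = {6,7,8} ∨ (9 ∈ e ∧ (e ∩ ({6,7,8} : Finset ℕ)).Nonempty))))

/-- `K₆ ∪ G₂(7)` (with `G₂(7)` on `{6,…,12}`, `x,y,z = 6,7,8`). -/
noncomputable def K6G2 : ThreeGraph :=
  mk3 (Finset.range 13)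
    (fun e => e ⊆ Finset.range 6 ∨ ((∀ v ∈ e, 6 ≤ v) ∧
      (e = {6,7,8} ∨ (e ∩ ({6,7,8} : Finset ℕ)).card = 2)))

/-- `H` is a member of `S` with the maximum number of edges. -/
def IsMaxIn (S : Set ThreeGraph) (H : ThreeGraph) : Prop :=
  H ∈ S ∧ ∀ G ∈ S, G.edges.card ≤ H.edges.card

/-- `cand 𝓕 n s` is the set of `n`-vertex `𝓕`-free 3-graphs not contained in any
`t`-extremal 3-graph for `t ≤ s`; so the `(s+1)`-st order Turán number of `𝓕` is the
maximal number of edges over `cand 𝓕 n s`, and the `(s+1)`-extremal 3-graphs are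
exactly those satisfying `IsMaxIn (cand 𝓕 n s)`. -/
def cand (𝓕 : Set ThreeGraph) (n : ℕ) : ℕ → Set ThreeGraph
  | 0 => {H | H.verts.card = n ∧ ∀ F ∈ 𝓕, ¬ HasCopy F H}
  | (s+1) => {H | H ∈ cand 𝓕 n s ∧ ∀ H', IsMaxIn (cand 𝓕 n s) H' → ¬ HasCopy H H'}

end ThreeGraph

open ThreeGraph

open Finset

namespace TuranAux

structure Free (E : Finset (Finset ℕ)) : Prop where
  card3 : ∀ e ∈ E, e.card = 3
  noP : ∀ x ∈ E, ∀ y ∈ E, ∀ z ∈ E, ∀ u w : ℕ,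
    x ∩ y = {u} → y ∩ z = {w} → x ∩ z = ∅ → False
  noC : ∀ x ∈ E, ∀ y ∈ E, ∀ z ∈ E, ∀ u w s : ℕ,
    x ∩ y = {u} → y ∩ z = {w} → x ∩ z = {s} → u ≠ w → False
  noPK : ∀ x ∈ E, ∀ y ∈ E, ∀ z ∈ E, ∀ u : ℕ,
    x ∩ y = {u} → z ∩ (x ∪ y) = ∅ → False

lemma exists_pair_of_card3 {e : Finset ℕ} (he : e.card = 3) {u : ℕ} (hu : u ∈ e) :
    ∃ p q, p ≠ q ∧ u ≠ p ∧ u ≠ q ∧ e = {u, p, q} := by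
  obtain ⟨a, b, c, hab, hac, hbc, rfl⟩ := Finset.card_eq_three.mp he
  simp only [mem_insert, mem_singleton] at hu
  rcases hu with rfl | rfl | rfl
  · exact ⟨b, c, hbc, hab, hac, rfl⟩
  · exact ⟨a, c, hac, fun h => hab h.symm, hbc, by ext x; simp; tauto⟩
  · exact ⟨a, b, hab, fun h => hac h.symm, fun h => hbc h.symm, by ext x; simp; tauto⟩

lemma inter_mid {p q r : ℕ} {z : Finset ℕ} (hp : p ∉ z) (hq : q ∈ z) (hr : r ∉ z) :
    ({p, q, r} : Finset ℕ) ∩ z = {q} := by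
  ext t
  simp only [mem_inter, mem_insert, mem_singleton]
  constructor
  · rintro ⟨rfl | rfl | rfl, h⟩ <;> first | rfl | exact absurd h (by assumption)
  · rintro rfl; exact ⟨Or.inr (Or.inl rfl), hq⟩

lemma inter_last {p q r : ℕ} {z : Finset ℕ} (hp : p ∉ z) (hq : q ∉ z) (hr : r ∈ z) :
    ({p, q, r} : Finset ℕ) ∩ z = {r} := by
  ext t
  simp only [mem_inter, mem_insert, mem_singleton]
  constructor
  · rintro ⟨rfl | rfl | rfl, h⟩ <;> first | rfl | exact absurd h (by assumption)
  · rintro rfl; exact ⟨Or.inr (Or.inr rfl), hr⟩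

lemma inter_none {p q r : ℕ} {z : Finset ℕ} (hp : p ∉ z) (hq : q ∉ z) (hr : r ∉ z) :
    ({p, q, r} : Finset ℕ) ∩ z = ∅ := by
  ext t
  simp only [mem_inter, mem_insert, mem_singleton, notMem_empty, iff_false, not_and]
  rintro (rfl | rfl | rfl) <;> assumption

/-- The key structural lemma. -/
lemma key {E : Finset (Finset ℕ)} (hE : Free E) {x y z : Finset ℕ} {u : ℕ}
    (hx : x ∈ E) (hy : y ∈ E) (hz : z ∈ E) (hxy : x ∩ y = {u}) (huz : u ∉ z) :
    x.erase u ⊆ z ∨ y.erase u ⊆ z := by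
  have hux : u ∈ x := (mem_inter.mp (hxy ▸ mem_singleton_self u)).1
  have huy : u ∈ y := (mem_inter.mp (hxy ▸ mem_singleton_self u)).2
  obtain ⟨x1, x2, hx12, hux1, hux2, hxe⟩ := exists_pair_of_card3 (hE.card3 x hx) hux
  obtain ⟨y1, y2, hy12, huy1, huy2, hye⟩ := exists_pair_of_card3 (hE.card3 y hy) huy
  have hx1y : x1 ∉ y := fun h => hux1 (by
    have : x1 ∈ x ∩ y := mem_inter.mpr ⟨by rw [hxe]; simp, h⟩
    rw [hxy, mem_singleton] at this; exact this.symm)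
  have hx2y : x2 ∉ y := fun h => hux2 (by
    have : x2 ∈ x ∩ y := mem_inter.mpr ⟨by rw [hxe]; simp, h⟩
    rw [hxy, mem_singleton] at this; exact this.symm)
  have hy1x : y1 ∉ x := fun h => huy1 (by
    have : y1 ∈ x ∩ y := mem_inter.mpr ⟨h, by rw [hye]; simp⟩
    rw [hxy, mem_singleton] at this; exact this.symm)
  have hy2x : y2 ∉ x := fun h => huy2 (by
    have : y2 ∈ x ∩ y := mem_inter.mpr ⟨h, by rw [hye]; simp⟩
    rw [hxy, mem_singleton] at this; exact this.symm)
  have hex : x.erase u = {x1, x2} := by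
    rw [hxe, Finset.erase_insert]
    simp only [mem_insert, mem_singleton]
    push_neg
    exact ⟨hux1, hux2⟩
  have hey : y.erase u = {y1, y2} := by
    rw [hye, Finset.erase_insert]
    simp only [mem_insert, mem_singleton]
    push_neg
    exact ⟨huy1, huy2⟩
  have hyx : y ∩ x = {u} := by rw [inter_comm]; exact hxy
  by_cases h1 : x1 ∈ z <;> by_cases h2 : x2 ∈ z <;> by_cases h3 : y1 ∈ z <;>
    by_cases h4 : y2 ∈ z
  all_goals try (left; rw [hex]; intro t ht; simp only [mem_insert, mem_singleton] at ht; rcases ht with rfl | rfl <;> assumption)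
  all_goals try (right; rw [hey]; intro t ht; simp only [mem_insert, mem_singleton] at ht; rcases ht with rfl | rfl <;> assumption)
  all_goals exfalso
  -- 9 remaining cases: (x-side, y-side) ∈ {one,none}² minus... with exactly-one or none
  -- compute x ∩ z and y ∩ z in each case
  -- order of 9 remaining goals: (TF,TF),(TF,FT),(TF,FF),(FT,TF),(FT,FT),(FT,FF),(FF,TF),(FF,FT),(FF,FF)
  · exact hE.noC x hx y hy z hz u y1 x1 hxy (by rw [hye]; exact inter_mid huz h3 h4)
      (by rw [hxe]; exact inter_mid huz h1 h2) huy1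
  · exact hE.noC x hx y hy z hz u y2 x1 hxy (by rw [hye]; exact inter_last huz h3 h4)
      (by rw [hxe]; exact inter_mid huz h1 h2) huy2
  · exact hE.noP y hy x hx z hz u x1 hyx (by rw [hxe]; exact inter_mid huz h1 h2)
      (by rw [hye]; exact inter_none huz h3 h4)
  · exact hE.noC x hx y hy z hz u y1 x2 hxy (by rw [hye]; exact inter_mid huz h3 h4)
      (by rw [hxe]; exact inter_last huz h1 h2) huy1
  · exact hE.noC x hx y hy z hz u y2 x2 hxy (by rw [hye]; exact inter_last huz h3 h4)
      (by rw [hxe]; exact inter_last huz h1 h2) huy2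
  · exact hE.noP y hy x hx z hz u x2 hyx (by rw [hxe]; exact inter_last huz h1 h2)
      (by rw [hye]; exact inter_none huz h3 h4)
  · exact hE.noP x hx y hy z hz u y1 hxy (by rw [hye]; exact inter_mid huz h3 h4)
      (by rw [hxe]; exact inter_none huz h1 h2)
  · exact hE.noP x hx y hy z hz u y2 hxy (by rw [hye]; exact inter_last huz h3 h4)
      (by rw [hxe]; exact inter_none huz h1 h2)
  · refine hE.noPK x hx y hy z hz u hxy ?_
    rw [hxe, hye]
    ext t
    simp only [mem_inter, mem_union, mem_insert, mem_singleton, notMem_empty, iff_false,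
      not_and]
    rintro ht ((rfl | rfl | rfl) | (rfl | rfl | rfl)) <;> exact (by assumption : t ∉ z) ht

end TuranAux

namespace TuranAux
open Finset

/-- Extract the third vertex of an edge containing a given pair. -/
lemma third_eq {e p : Finset ℕ} (hp : p ⊆ e) (he : e.card = 3) (hp2 : p.card = 2) :
    ∃ t, e \ p = {t} ∧ e = insert t p ∧ t ∉ p := by
  have hcard : (e \ p).card = 1 := by
    rw [card_sdiff_of_subset hp, he, hp2]
  obtain ⟨t, ht⟩ := Finset.card_eq_one.mp hcard
  refine ⟨t, ht, ?_, ?_⟩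
  · have h1 : t ∈ e \ p := ht ▸ mem_singleton_self t
    have h2 : e = (e \ p) ∪ p := by rw [sdiff_union_of_subset hp]
    rw [h2, ht]; ext s; simp
  · have h1 : t ∈ e \ p := ht ▸ mem_singleton_self t
    exact (mem_sdiff.mp h1).2

/-- counting a pair-star whose third vertices lie in `T`. -/
lemma star_count {F : Finset (Finset ℕ)} {p T : Finset ℕ} (hp2 : p.card = 2)
    (hc : ∀ e ∈ F, e.card = 3) (hs : ∀ e ∈ F, p ⊆ e) (ht : ∀ e ∈ F, e \ p ⊆ T) :
    F.card ≤ T.card := by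
  apply Finset.card_le_card_of_injOn (fun e => (e \ p).sum id)
  · intro e he
    obtain ⟨t, hts, -, -⟩ := third_eq (hs e he) (hc e he) hp2
    simp only [hts, sum_singleton, id]
    exact (ht e he) (hts ▸ mem_singleton_self t)
  · intro e he e' he' heq
    obtain ⟨t, hts, hei, -⟩ := third_eq (hs e he) (hc e he) hp2
    obtain ⟨t', hts', hei', -⟩ := third_eq (hs e' he') (hc e' he') hp2
    simp only [hts, hts', sum_singleton, id] at heq
    rw [hei, hei', heq]

/-- A family of 3-sets contained in a 4-set has at most 4 members. -/
lemma four_bound {F : Finset (Finset ℕ)} {Q : Finset ℕ} (hQ : Q.card = 4)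
    (hc : ∀ e ∈ F, e.card = 3) (hs : ∀ e ∈ F, e ⊆ Q) : F.card ≤ 4 := by
  have : F ⊆ Q.powersetCard 3 := by
    intro e he
    rw [mem_powersetCard]
    exact ⟨hs e he, hc e he⟩
  calc F.card ≤ (Q.powersetCard 3).card := card_le_card this
    _ = 4 := by rw [card_powersetCard, hQ]; rfl

/-- classification of pairwise 2-intersecting families of 3-sets. -/
lemma two_int_struct {F : Finset (Finset ℕ)} (hc : ∀ e ∈ F, e.card = 3)
    (h2 : ∀ e ∈ F, ∀ e' ∈ F, e ≠ e' → 2 ≤ (e ∩ e').card) :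
    (∃ p : Finset ℕ, p.card = 2 ∧ ∀ e ∈ F, p ⊆ e) ∨
    (∃ Q : Finset ℕ, Q.card = 4 ∧ ∀ e ∈ F, e ⊆ Q) := by
  by_cases htriv : ∀ e ∈ F, ∀ e' ∈ F, e = e'
  · -- F has at most one element
    rcases F.eq_empty_or_nonempty with rfl | ⟨e, he⟩
    · exact Or.inl ⟨{0, 1}, by decide, by simp⟩
    · obtain ⟨a, b, c, hab, -, -, hee⟩ := Finset.card_eq_three.mp (hc e he)
      refine Or.inl ⟨{a, b}, card_pair hab, fun e' he' => ?_⟩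
      rw [← htriv e he e' he', hee]
      intro t htm; simp only [mem_insert, mem_singleton] at htm
      rcases htm with rfl | rfl <;> simp
  · push_neg at htriv
    obtain ⟨e, he, e', he', hne⟩ := htriv
    set p := e ∩ e' with hpdef
    have hce := hc e he
    have hce' := hc e' he'
    have hple : (e ∩ e').card ≤ 2 := by
      by_contra hgt
      push_neg at hgt
      have h1 : e ∩ e' = e := eq_of_subset_of_card_le inter_subset_left (by omega)
      have h2 : e ⊆ e' := by rw [← h1]; exact inter_subset_right
      exact hne (eq_of_subset_of_card_le h2 (by omega))
    have hp2 : p.card = 2 := le_antisymm hple (h2 e he e' he' hne)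
    by_cases hall : ∀ h ∈ F, p ⊆ h
    · exact Or.inl ⟨p, hp2, hall⟩
    push_neg at hall
    obtain ⟨h, hhF, hph⟩ := hall
    have hpe : p ⊆ e := inter_subset_left
    have hpe' : p ⊆ e' := inter_subset_right
    obtain ⟨z, hzs, hze, hzp⟩ := third_eq hpe hce hp2
    obtain ⟨w, hws, hwe, hwp⟩ := third_eq hpe' hce' hp2
    have hze' : z ∉ e' := fun hmem => hzp (by
      rw [hpdef]; exact mem_inter.mpr ⟨by rw [hze]; exact mem_insert_self _ _, hmem⟩)
    have hwe'' : w ∉ e := fun hmem => hwp (by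
      rw [hpdef]; exact mem_inter.mpr ⟨hmem, by rw [hwe]; exact mem_insert_self _ _⟩)
    have hzw : z ≠ w := fun hzw => hze' (hzw ▸ (by rw [hwe]; exact mem_insert_self _ _))
    refine Or.inr ⟨e ∪ e', ?_, ?_⟩
    · have := card_inter_add_card_union e e'
      rw [← hpdef, hp2, hce, hce'] at this
      omega
    -- first : h ⊆ e ∪ e', in fact h = {z, w, t} with t ∈ p
    have hhe : h ≠ e := fun hh => hph (hh ▸ hpe)
    have hhe' : h ≠ e' := fun hh => hph (hh ▸ hpe')
    have hhei : 2 ≤ (h ∩ e).card := h2 h hhF e he hhe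
    have hhei' : 2 ≤ (h ∩ e').card := h2 h hhF e' he' hhe'
    have hzh : z ∈ h := by
      by_contra hzh
      have hsub : h ∩ e ⊆ p := by
        intro s hsmem
        obtain ⟨hsh, hse⟩ := mem_inter.mp hsmem
        rw [hze] at hse
        rcases mem_insert.mp hse with rfl | hsp
        · exact absurd hsh hzh
        · exact hsp
      have : h ∩ e = p := eq_of_subset_of_card_le hsub (by omega)
      exact hph (this ▸ inter_subset_left)
    have hwh : w ∈ h := by
      by_contra hwh
      have hsub : h ∩ e' ⊆ p := by
        intro s hsmem
        obtain ⟨hsh, hse⟩ := mem_inter.mp hsmem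
        rw [hwe] at hse
        rcases mem_insert.mp hse with rfl | hsp
        · exact absurd hsh hwh
        · exact hsp
      have : h ∩ e' = p := eq_of_subset_of_card_le hsub (by omega)
      exact hph (this ▸ inter_subset_left)
    -- h = {z, w, t} with t ∈ p
    have hph1 : (p ∩ h).card ≤ 1 := by
      by_contra hcon
      push_neg at hcon
      have : p ∩ h = p := eq_of_subset_of_card_le inter_subset_left (by omega)
      exact hph (this ▸ inter_subset_right)
    have hth : ∃ t, t ∈ p ∧ h = {z, w, t} := by
      have hhc := hc h hhF
      obtain ⟨t1, t2, h12, hzt1, hzt2, hhe2⟩ := exists_pair_of_card3 hhc hzh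
      -- w is t1 or t2
      have hw12 : w = t1 ∨ w = t2 := by
        have : w ∈ h := hwh
        rw [hhe2] at this
        simp only [mem_insert, mem_singleton] at this
        tauto
      -- the remaining vertex must be in p since |h ∩ e| ≥ 2
      rcases hw12 with rfl | rfl
      · -- h = {z, w, t2}; show t2 ∈ p
        refine ⟨t2, ?_, hhe2⟩
        -- h ∩ e ≥ 2, e = insert z p, w ∉ e
        have : h ∩ e ⊆ insert z (p ∩ h) := by
          intro s hs
          obtain ⟨hsh, hse⟩ := mem_inter.mp hs
          rw [hze] at hse
          rcases mem_insert.mp hse with rfl | hsp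
          · exact mem_insert_self _ _
          · exact mem_insert_of_mem (mem_inter.mpr ⟨hsp, hsh⟩)
        have hcard2 : (insert z (p ∩ h)).card ≤ (p ∩ h).card + 1 := card_insert_le _ _
        have hpc : (p ∩ h).card = 1 := by
          have := card_le_card this
          omega
        obtain ⟨t, htt⟩ := Finset.card_eq_one.mp hpc
        have htp : t ∈ p ∧ t ∈ h := mem_inter.mp (htt ▸ mem_singleton_self t)
        have : t = z ∨ t = w ∨ t = t2 := by
          have := htp.2; rw [hhe2] at this; simpa using this
        rcases this with rfl | rfl | rfl
        · exact absurd htp.1 hzp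
        · exact absurd htp.1 hwp
        · exact htp.1
      · -- h = {z, w(=t2 position), t1} symmetric
        refine ⟨t1, ?_, by rw [hhe2]; ext s; simp; tauto⟩
        have : h ∩ e ⊆ insert z (p ∩ h) := by
          intro s hs
          obtain ⟨hsh, hse⟩ := mem_inter.mp hs
          rw [hze] at hse
          rcases mem_insert.mp hse with rfl | hsp
          · exact mem_insert_self _ _
          · exact mem_insert_of_mem (mem_inter.mpr ⟨hsp, hsh⟩)
        have hcard2 : (insert z (p ∩ h)).card ≤ (p ∩ h).card + 1 := card_insert_le _ _
        have hpc : (p ∩ h).card = 1 := by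
          have := card_le_card this
          omega
        obtain ⟨t, htt⟩ := Finset.card_eq_one.mp hpc
        have htp : t ∈ p ∧ t ∈ h := mem_inter.mp (htt ▸ mem_singleton_self t)
        have : t = z ∨ t = t1 ∨ t = w := by
          have := htp.2; rw [hhe2] at this; simpa using this
        rcases this with rfl | rfl | rfl
        · exact absurd htp.1 hzp
        · exact htp.1
        · exact absurd htp.1 hwp
    obtain ⟨t, htp, hht⟩ := hth
    -- now show every k ∈ F is inside Q = e ∪ e'
    intro k hkF
    by_contra hknot
    obtain ⟨s, hsk, hsQ⟩ := not_subset.mp hknot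
    have hse : s ∉ e := fun hmem => hsQ (mem_union_left _ hmem)
    have hse' : s ∉ e' := fun hmem => hsQ (mem_union_right _ hmem)
    have hke : k ≠ e := fun hh => hse (hh ▸ hsk)
    have hke' : k ≠ e' := fun hh => hse' (hh ▸ hsk)
    have hkc := hc k hkF
    -- k ∖ {s} has card 2 and contains k ∩ e and k ∩ e'
    have hke2 : 2 ≤ (k ∩ e).card := h2 k hkF e he hke
    have hke2' : 2 ≤ (k ∩ e').card := h2 k hkF e' he' hke'
    have hsub1 : k ∩ e ⊆ k.erase s := fun a ha => mem_erase.mpr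
      ⟨fun h' => hse (h' ▸ (mem_inter.mp ha).2), (mem_inter.mp ha).1⟩
    have hsub2 : k ∩ e' ⊆ k.erase s := fun a ha => mem_erase.mpr
      ⟨fun h' => hse' (h' ▸ (mem_inter.mp ha).2), (mem_inter.mp ha).1⟩
    have herc : (k.erase s).card = 2 := by rw [card_erase_of_mem hsk, hkc]
    have heq1 : k ∩ e = k.erase s := eq_of_subset_of_card_le hsub1 (by omega)
    have heq2 : k ∩ e' = k.erase s := eq_of_subset_of_card_le hsub2 (by omega)
    have hpk : k.erase s ⊆ p := by
      intro a ha
      rw [hpdef]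
      have h1 : a ∈ k ∩ e := heq1 ▸ ha
      have h2' : a ∈ k ∩ e' := heq2 ▸ ha
      exact mem_inter.mpr ⟨(mem_inter.mp h1).2, (mem_inter.mp h2').2⟩
    have hpk2 : k.erase s = p := eq_of_subset_of_card_le hpk (by omega)
    -- then k ∩ h has at most one element, contradiction
    have hkh : k ≠ h := by
      intro hh
      apply hph
      rw [← hh, ← hpk2]
      exact erase_subset _ _
    have hkh2 : 2 ≤ (k ∩ h).card := h2 k hkF h hhF hkh
    have hsh : s ∉ h := by
      rw [hht]
      simp only [mem_insert, mem_singleton]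
      push_neg
      refine ⟨?_, ?_, ?_⟩
      · rintro rfl; exact hse (by rw [hze]; exact mem_insert_self _ _)
      · rintro rfl; exact hse' (by rw [hwe]; exact mem_insert_self _ _)
      · rintro rfl; exact hse (hpe htp)
    have hsub3 : k ∩ h ⊆ p ∩ h := by
      intro a ha
      obtain ⟨hak, hah⟩ := mem_inter.mp ha
      have : a ∈ k.erase s := mem_erase.mpr ⟨fun h' => hsh (h' ▸ hah), hak⟩
      exact mem_inter.mpr ⟨hpk2 ▸ this, hah⟩
    have := card_le_card hsub3
    omega

end TuranAux

namespace TuranAux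
open Finset

/-- A family of 3-sets in which no two members share exactly one vertex has at
most as many members as the size of its span. -/
lemma span_bound (F : Finset (Finset ℕ)) (hc : ∀ e ∈ F, e.card = 3)
    (h1 : ∀ e ∈ F, ∀ e' ∈ F, e ≠ e' → (e ∩ e').card ≠ 1) :
    F.card ≤ (F.biUnion id).card := by
  generalize hN : F.card = N
  induction N using Nat.strong_induction_on generalizing F with
  | _ N ih =>
  rcases F.eq_empty_or_nonempty with rfl | ⟨e, he⟩
  · simp only [card_empty] at hN
    omega
  classical
  set C := F.filter (fun h => (h ∩ e).Nonempty) with hCdef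
  have hCF : C ⊆ F := filter_subset _ _
  have heC : e ∈ C := mem_filter.mpr ⟨he, by
    rw [inter_self]; exact Finset.card_pos.mp (by rw [hc e he]; omega)⟩
  have hC2 : ∀ h ∈ C, 2 ≤ (h ∩ e).card := by
    intro h hh
    obtain ⟨hhF, hne⟩ := mem_filter.mp hh
    rcases eq_or_ne h e with rfl | hne'
    · rw [inter_self, hc h hhF]; omega
    · have := h1 h hhF e he hne'
      have := Finset.card_pos.mpr hne
      omega
  have hCint : ∀ h ∈ C, ∀ h' ∈ C, h ≠ h' → 2 ≤ (h ∩ h').card := by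
    intro h hh h' hh' hne
    have hA := hC2 h hh
    have hB := hC2 h' hh'
    have hsub : (h ∩ e) ∪ (h' ∩ e) ⊆ e := by
      intro a ha
      rcases mem_union.mp ha with h'' | h''
      · exact (mem_inter.mp h'').2
      · exact (mem_inter.mp h'').2
    have hu : ((h ∩ e) ∪ (h' ∩ e)).card ≤ 3 := by
      calc _ ≤ e.card := card_le_card hsub
        _ = 3 := hc e he
    have hi := card_inter_add_card_union (h ∩ e) (h' ∩ e)
    have hne2 : ((h ∩ e) ∩ (h' ∩ e)).Nonempty := Finset.card_pos.mp (by omega)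
    obtain ⟨a, ha⟩ := hne2
    have hahh' : a ∈ h ∩ h' := by
      simp only [mem_inter] at ha ⊢
      exact ⟨ha.1.1, ha.2.1⟩
    have hne3 : (h ∩ h').Nonempty := ⟨a, hahh'⟩
    have hne1 := h1 h (hCF hh) h' (hCF hh') hne
    have := Finset.card_pos.mpr hne3
    omega
  have hCc : ∀ h ∈ C, h.card = 3 := fun h hh => hc h (hCF hh)
  -- |C| ≤ |span C|
  have hCspan : C.card ≤ (C.biUnion id).card := by
    rcases two_int_struct hCc hCint with ⟨p, hp2, hps⟩ | ⟨Q, hQ4, hQs⟩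
    · calc C.card ≤ ((C.biUnion id) \ p).card := by
            apply star_count hp2 hCc hps
            intro h hh a ha
            obtain ⟨hah, hap⟩ := mem_sdiff.mp ha
            exact mem_sdiff.mpr ⟨mem_biUnion.mpr ⟨h, hh, hah⟩, hap⟩
        _ ≤ (C.biUnion id).card := card_le_card sdiff_subset
    · have h4 := four_bound hQ4 hCc hQs
      by_cases hC1 : C.card ≤ 1
      · have : e ⊆ C.biUnion id := fun a ha => mem_biUnion.mpr ⟨e, heC, ha⟩
        have := card_le_card this
        rw [hc e he] at this
        omega
      · push_neg at hC1
        obtain ⟨h, hh, h', hh', hne⟩ := Finset.one_lt_card.mp hC1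
        have hi2 : (h ∩ h').card = 2 := by
          have hge := hCint h hh h' hh' hne
          by_contra hcon
          have hgt : 3 ≤ (h ∩ h').card := by omega
          have : h ∩ h' = h := eq_of_subset_of_card_le inter_subset_left
            (by rw [hCc h hh]; omega)
          have hsub : h ⊆ h' := by rw [← this]; exact inter_subset_right
          exact hne (eq_of_subset_of_card_le hsub
            (by rw [hCc h' hh', hCc h hh]))
        have huc : (h ∪ h').card = 4 := by
          have := card_inter_add_card_union h h'
          rw [hi2, hCc h hh, hCc h' hh'] at this
          omega
        have hsub : h ∪ h' ⊆ C.biUnion id := by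
          intro a ha
          rcases mem_union.mp ha with h'' | h''
          · exact mem_biUnion.mpr ⟨h, hh, h''⟩
          · exact mem_biUnion.mpr ⟨h', hh', h''⟩
        have := card_le_card hsub
        omega
  -- the rest of the family avoids span C entirely
  set F' := F \ C with hF'def
  have hF'span : ∀ h ∈ F', ∀ x ∈ h, x ∉ C.biUnion id := by
    intro h hh x hx hmem
    obtain ⟨c, hcC, hxc⟩ := mem_biUnion.mp hmem
    obtain ⟨hhF, hhnC⟩ := mem_sdiff.mp hh
    have hhe : h ∩ e = ∅ := by
      by_contra hcon
      exact hhnC (mem_filter.mpr ⟨hhF, nonempty_iff_ne_empty.mpr hcon⟩)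
    have hhc : h ≠ c := by
      rintro rfl
      exact hhnC hcC
    have hhcint : 2 ≤ (h ∩ c).card := by
      have hne : (h ∩ c).Nonempty := ⟨x, mem_inter.mpr ⟨hx, hxc⟩⟩
      have := h1 h hhF c (hCF hcC) hhc
      have := Finset.card_pos.mpr hne
      omega
    have hce2 : 2 ≤ (c ∩ e).card := hC2 c hcC
    -- h ∩ c and c ∩ e are two big subsets of c, so they intersect
    have hsub : (h ∩ c) ∪ (c ∩ e) ⊆ c := by
      intro a ha
      rcases mem_union.mp ha with h'' | h''
      · exact (mem_inter.mp h'').2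
      · exact (mem_inter.mp h'').1
    have hu : ((h ∩ c) ∪ (c ∩ e)).card ≤ 3 := by
      calc _ ≤ c.card := card_le_card hsub
        _ = 3 := hc c (hCF hcC)
    have hi := card_inter_add_card_union (h ∩ c) (c ∩ e)
    have : ((h ∩ c) ∩ (c ∩ e)).Nonempty := Finset.card_pos.mp (by omega)
    obtain ⟨a, ha⟩ := this
    simp only [mem_inter] at ha
    have : a ∈ h ∩ e := mem_inter.mpr ⟨ha.1.1, ha.2.2⟩
    rw [hhe] at this
    exact absurd this (notMem_empty a)
  have hcardsplit : C.card + F'.card = F.card := by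
    rw [hF'def, card_sdiff_of_subset hCF]
    have := card_le_card hCF
    omega
  have hCpos : 1 ≤ C.card := Finset.card_pos.mpr ⟨e, heC⟩
  have hF'lt : F'.card < N := by omega
  have hF'bound : F'.card ≤ (F'.biUnion id).card :=
    ih F'.card hF'lt F' (fun e' he' => hc e' (mem_sdiff.mp he').1)
      (fun e1 h1' e2 h2' hne => h1 e1 (mem_sdiff.mp h1').1 e2 (mem_sdiff.mp h2').1 hne) rfl
  have hsub1 : C.biUnion id ⊆ F.biUnion id := by
    intro a ha
    obtain ⟨c, hcC, hac⟩ := mem_biUnion.mp ha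
    exact mem_biUnion.mpr ⟨c, hCF hcC, hac⟩
  have hsub2 : F'.biUnion id ⊆ (F.biUnion id) \ (C.biUnion id) := by
    intro a ha
    obtain ⟨h, hhF', hah⟩ := mem_biUnion.mp ha
    exact mem_sdiff.mpr ⟨mem_biUnion.mpr ⟨h, (mem_sdiff.mp hhF').1, hah⟩,
      hF'span h hhF' a hah⟩
  have hkey := card_sdiff_add_card_eq_card hsub1
  have h2' := card_le_card hsub2
  omega

end TuranAux

namespace TuranAux
open Finset

section Core

variable {V : Finset ℕ} {E : Finset (Finset ℕ)} {m m' m1 m2 : Finset ℕ}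

/-- trichotomy for edges relative to a pair of disjoint edges. -/
lemma cover (hE : Free E) (hm : m ∈ E) (hm' : m' ∈ E) (hd : m ∩ m' = ∅)
    {e : Finset ℕ} (he : e ∈ E) :
    2 ≤ (e ∩ m).card ∨ 2 ≤ (e ∩ m').card ∨ (e ∩ m = ∅ ∧ e ∩ m' = ∅) := by
  have hd' : m' ∩ m = ∅ := by rw [inter_comm]; exact hd
  by_cases h1 : 2 ≤ (e ∩ m).card
  · exact Or.inl h1
  by_cases h2 : 2 ≤ (e ∩ m').card
  · exact Or.inr (Or.inl h2)
  push_neg at h1 h2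
  refine Or.inr (Or.inr ?_)
  have hem : e ∩ m = ∅ := by
    have h1' : (e ∩ m).card = 0 ∨ (e ∩ m).card = 1 := by omega
    rcases h1' with h | h
    · exact card_eq_zero.mp h
    obtain ⟨u, hu⟩ := Finset.card_eq_one.mp h
    exfalso
    have h2' : (e ∩ m').card = 0 ∨ (e ∩ m').card = 1 := by omega
    rcases h2' with h' | h'
    · -- e ∩ m' = ∅ : noPK with (e, m) and m'
      refine hE.noPK e he m hm m' hm' u hu ?_
      have ha : m' ∩ e = ∅ := by rw [inter_comm]; exact card_eq_zero.mp h'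
      rw [inter_union_distrib_left, ha, hd', empty_union]
    · obtain ⟨u', hu'⟩ := Finset.card_eq_one.mp h'
      exact hE.noP m hm e he m' hm' u u' (by rw [inter_comm]; exact hu) hu' hd
  refine ⟨hem, ?_⟩
  have h2'' : (e ∩ m').card = 0 ∨ (e ∩ m').card = 1 := by omega
  rcases h2'' with h' | h'
  · exact card_eq_zero.mp h'
  obtain ⟨u', hu'⟩ := Finset.card_eq_one.mp h'
  exfalso
  refine hE.noPK e he m' hm' m hm u' hu' ?_
  have ha : m ∩ e = ∅ := by rw [inter_comm]; exact hem
  rw [inter_union_distrib_left, ha, hd, union_empty]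

/-- edges meeting `m` in at least two vertices pairwise intersect in ≥ 2 vertices. -/
lemma side_twoInt (hE : Free E) (hm : m ∈ E) (hm' : m' ∈ E) (hd : m ∩ m' = ∅)
    {e e' : Finset ℕ} (he : e ∈ E) (he' : e' ∈ E) (h2 : 2 ≤ (e ∩ m).card)
    (h2' : 2 ≤ (e' ∩ m).card) (hne : e ≠ e') : 2 ≤ (e ∩ e').card := by
  have hmc : m.card = 3 := hE.card3 m hm
  have hsub : (e ∩ m) ∪ (e' ∩ m) ⊆ m := by
    intro a ha
    rcases mem_union.mp ha with h'' | h''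
    · exact (mem_inter.mp h'').2
    · exact (mem_inter.mp h'').2
  have hu : ((e ∩ m) ∪ (e' ∩ m)).card ≤ 3 := hmc ▸ card_le_card hsub
  have hi := card_inter_add_card_union (e ∩ m) (e' ∩ m)
  have hnon : ((e ∩ m) ∩ (e' ∩ m)).Nonempty := Finset.card_pos.mp (by omega)
  obtain ⟨w, hw⟩ := hnon
  simp only [mem_inter] at hw
  have hwee : w ∈ e ∩ e' := mem_inter.mpr ⟨hw.1.1, hw.2.1⟩
  by_contra hcon
  push_neg at hcon
  have hsing : e ∩ e' = {w} := by
    have h1 : (e ∩ e').card = 1 := by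
      have := Finset.card_pos.mpr ⟨w, hwee⟩
      omega
    obtain ⟨t, ht⟩ := Finset.card_eq_one.mp h1
    rw [ht]
    rw [ht] at hwee
    rw [mem_singleton] at hwee
    rw [hwee]
  have hwm : w ∈ m := hw.1.2
  have hwm' : w ∉ m' := fun hmem => (notMem_empty w) (hd ▸ mem_inter.mpr ⟨hwm, hmem⟩)
  rcases key hE he he' hm' hsing hwm' with hk | hk
  · -- e.erase w ⊆ m', but (e ∩ m).erase w is nonempty and lands in m ∩ m'
    have : ((e ∩ m).erase w).Nonempty := by
      apply Finset.card_pos.mp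
      rw [card_erase_of_mem (mem_inter.mpr ⟨hw.1.1, hwm⟩)]
      omega
    obtain ⟨x, hx⟩ := this
    obtain ⟨hxw, hxm⟩ := mem_erase.mp hx
    have hxe : x ∈ e := (mem_inter.mp hxm).1
    have hxm2 : x ∈ m' := hk (mem_erase.mpr ⟨hxw, hxe⟩)
    exact (notMem_empty x) (hd ▸ mem_inter.mpr ⟨(mem_inter.mp hxm).2, hxm2⟩)
  · have : ((e' ∩ m).erase w).Nonempty := by
      apply Finset.card_pos.mp
      rw [card_erase_of_mem (mem_inter.mpr ⟨hw.2.1, hwm⟩)]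
      omega
    obtain ⟨x, hx⟩ := this
    obtain ⟨hxw, hxm⟩ := mem_erase.mp hx
    have hxe : x ∈ e' := (mem_inter.mp hxm).1
    have hxm2 : x ∈ m' := hk (mem_erase.mpr ⟨hxw, hxe⟩)
    exact (notMem_empty x) (hd ▸ mem_inter.mpr ⟨(mem_inter.mp hxm).2, hxm2⟩)

/-- The edges meeting `m'` in ≥ 2 vertices number at most `|V| - 2`. -/
lemma side_le (hE : Free E) (hsub : ∀ e ∈ E, e ⊆ V) (hm : m ∈ E) (hm' : m' ∈ E)
    (hd : m ∩ m' = ∅) (hV : 6 ≤ V.card) :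
    (E.filter (fun e => 2 ≤ (e ∩ m').card)).card + 2 ≤ V.card := by
  classical
  set F := E.filter (fun e => 2 ≤ (e ∩ m').card) with hF
  have hFE : F ⊆ E := filter_subset _ _
  have hFc : ∀ e ∈ F, e.card = 3 := fun e he => hE.card3 e (hFE he)
  have hd' : m' ∩ m = ∅ := by rw [inter_comm]; exact hd
  have hFint : ∀ e ∈ F, ∀ e' ∈ F, e ≠ e' → 2 ≤ (e ∩ e').card := by
    intro e he e' he' hne
    exact side_twoInt hE hm' hm hd' (hFE he) (hFE he')
      (mem_filter.mp he).2 (mem_filter.mp he').2 hne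
  rcases F.eq_empty_or_nonempty with hFe | ⟨e₀, he₀⟩
  · rw [hFe]; simpa using by omega
  rcases two_int_struct hFc hFint with ⟨q, hq2, hqs⟩ | ⟨Q, hQ4, hQs⟩
  · have hqV : q ⊆ V := (hqs e₀ he₀).trans (hsub e₀ (hFE he₀))
    have : F.card ≤ (V \ q).card := by
      apply star_count hq2 hFc hqs
      intro e he a ha
      exact mem_sdiff.mpr ⟨hsub e (hFE he) (mem_sdiff.mp ha).1, (mem_sdiff.mp ha).2⟩
    have := card_sdiff_of_subset hqV
    omega
  · have := four_bound hQ4 hFc hQs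
    omega

end Core

end TuranAux

namespace TuranAux
open Finset

section Core2

variable {V : Finset ℕ} {E : Finset (Finset ℕ)} {m m' : Finset ℕ}

/-- Edges avoiding both `m` and `m'` pairwise intersect in 0 or 2 vertices, and
are bounded by their span. -/
lemma E0_bound (hE : Free E) (hm : m ∈ E) (hm' : m' ∈ E) (hd : m ∩ m' = ∅) :
    letI E0 := E.filter (fun e => e ∩ m = ∅ ∧ e ∩ m' = ∅)
    E0.card ≤ (E0.biUnion id).card := by
  classical
  set E0 := E.filter (fun e => e ∩ m = ∅ ∧ e ∩ m' = ∅) with hE0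
  have hE0E : E0 ⊆ E := filter_subset _ _
  apply span_bound _ (fun e he => hE.card3 e (hE0E he))
  intro e he e' he' hne hcard
  obtain ⟨u, hu⟩ := Finset.card_eq_one.mp hcard
  have hprop := (mem_filter.mp he).2
  have hprop' := (mem_filter.mp he').2
  have hue : u ∈ e := (mem_inter.mp (hu ▸ mem_singleton_self u)).1
  have hum : u ∉ m := fun hmem => (notMem_empty u) (hprop.1 ▸ mem_inter.mpr ⟨hue, hmem⟩)
  rcases key hE (hE0E he) (hE0E he') hm hu hum with hk | hk
  · have hnon : (e.erase u).Nonempty := by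
      apply Finset.card_pos.mp
      rw [card_erase_of_mem hue, hE.card3 e (hE0E he)]
      omega
    obtain ⟨x, hx⟩ := hnon
    exact (notMem_empty x) (hprop.1 ▸ mem_inter.mpr ⟨(mem_erase.mp hx).2, hk hx⟩)
  · have hue' : u ∈ e' := (mem_inter.mp (hu ▸ mem_singleton_self u)).2
    have hnon : (e'.erase u).Nonempty := by
      apply Finset.card_pos.mp
      rw [card_erase_of_mem hue', hE.card3 e' (hE0E he')]
      omega
    obtain ⟨x, hx⟩ := hnon
    exact (notMem_empty x) (hprop'.1 ▸ mem_inter.mpr ⟨(mem_erase.mp hx).2, hk hx⟩)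

/-- Main bound when the `m`-side is a pair-star with pair inside `m`. -/
lemma star_side_bound (hE : Free E) (hsub : ∀ e ∈ E, e ⊆ V) (hm : m ∈ E) (hm' : m' ∈ E)
    (hd : m ∩ m' = ∅) (hV : 6 ≤ V.card) {p : Finset ℕ} (hp2 : p.card = 2) (hpm : p ⊆ m)
    (hstar : ∀ e ∈ E, 2 ≤ (e ∩ m).card → p ⊆ e) :
    E.card + 4 ≤ 2 * V.card := by
  classical
  set E1 := E.filter (fun e => 2 ≤ (e ∩ m).card) with hE1
  set E2 := E.filter (fun e => 2 ≤ (e ∩ m').card) with hE2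
  set E0 := E.filter (fun e => e ∩ m = ∅ ∧ e ∩ m' = ∅) with hE0
  set W0 := E0.biUnion id with hW0
  have hE1E : E1 ⊆ E := filter_subset _ _
  have hE0E : E0 ⊆ E := filter_subset _ _
  have hcover : E ⊆ E1 ∪ E2 ∪ E0 := by
    intro e he
    rcases cover hE hm hm' hd he with h | h | h
    · exact mem_union_left _ (mem_union_left _ (mem_filter.mpr ⟨he, h⟩))
    · exact mem_union_left _ (mem_union_right _ (mem_filter.mpr ⟨he, h⟩))
    · exact mem_union_right _ (mem_filter.mpr ⟨he, h⟩)
  have hcards : E.card ≤ E1.card + E2.card + E0.card :=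
    le_trans (card_le_card hcover) (le_trans (card_union_le _ _)
      (by have := card_union_le E1 E2; omega))
  -- span of E0 avoids m, m' and p
  have hW0m : ∀ x ∈ W0, x ∉ m ∧ x ∉ m' ∧ x ∈ V := by
    intro x hx
    obtain ⟨e0, he0, hxe0⟩ := mem_biUnion.mp hx
    have hprop := (mem_filter.mp he0).2
    refine ⟨fun hmem => (notMem_empty x) (hprop.1 ▸ mem_inter.mpr ⟨hxe0, hmem⟩),
      fun hmem => (notMem_empty x) (hprop.2 ▸ mem_inter.mpr ⟨hxe0, hmem⟩),
      hsub e0 (hE0E he0) hxe0⟩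
  -- cross exclusion: third vertices of E1-edges avoid W0
  have hcross : ∀ e ∈ E1, e \ p ⊆ (V \ p) \ W0 := by
    intro e he a ha
    obtain ⟨hae, hap⟩ := mem_sdiff.mp ha
    refine mem_sdiff.mpr ⟨mem_sdiff.mpr ⟨hsub e (hE1E he) hae, hap⟩, ?_⟩
    intro haW
    obtain ⟨e0, he0, hae0⟩ := mem_biUnion.mp haW
    simp only [id_eq] at hae0
    have hprop := (mem_filter.mp he0).2
    -- e = insert a p
    have hpe : p ⊆ e := hstar e (hE1E he) (mem_filter.mp he).2
    obtain ⟨t, hts, hte, htp⟩ := third_eq hpe (hE.card3 e (hE1E he)) hp2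
    have hta : t = a := by
      have : a ∈ e \ p := mem_sdiff.mpr ⟨hae, hap⟩
      rw [hts, mem_singleton] at this
      exact this.symm
    subst hta
    -- e ∩ e0 = {t}
    have hpe0 : p ∩ e0 = ∅ := by
      rw [eq_empty_iff_forall_notMem]
      intro b hb
      obtain ⟨hbp, hbe0⟩ := mem_inter.mp hb
      exact (notMem_empty b) (hprop.1 ▸ mem_inter.mpr ⟨hbe0, hpm hbp⟩)
    have hee0 : e ∩ e0 = {t} := by
      rw [hte, insert_inter_of_mem hae0, hpe0, insert_empty_eq]
    have htm' : t ∉ m' := fun hmem =>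
      (notMem_empty t) (hprop.2 ▸ mem_inter.mpr ⟨hae0, hmem⟩)
    rcases key hE (hE1E he) (hE0E he0) hm' hee0 htm' with hk | hk
    · -- e.erase t = p ⊆ m', contradicting m ∩ m' = ∅
      have herase : e.erase t = p := by
        rw [hte, Finset.erase_insert htp]
      rw [herase] at hk
      have hnon : p.Nonempty := Finset.card_pos.mp (by omega)
      obtain ⟨b, hb⟩ := hnon
      exact (notMem_empty b) (hd ▸ mem_inter.mpr ⟨hpm hb, hk hb⟩)
    · have hnon : (e0.erase t).Nonempty := by
        apply Finset.card_pos.mp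
        rw [card_erase_of_mem hae0, hE.card3 e0 (hE0E he0)]
        omega
      obtain ⟨x, hx⟩ := hnon
      exact (notMem_empty x) (hprop.2 ▸ mem_inter.mpr ⟨(mem_erase.mp hx).2, hk hx⟩)
  -- counts
  have hc1 : E1.card ≤ ((V \ p) \ W0).card :=
    star_count hp2 (fun e he => hE.card3 e (hE1E he))
      (fun e he => hstar e (hE1E he) (mem_filter.mp he).2) hcross
  have hc0 : E0.card ≤ W0.card := E0_bound hE hm hm' hd
  have hc2 : E2.card + 2 ≤ V.card := side_le hE hsub hm hm' hd hV
  have hW0Vp : W0 ⊆ V \ p := by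
    intro x hx
    obtain ⟨h1, h2, h3⟩ := hW0m x hx
    exact mem_sdiff.mpr ⟨h3, fun hp => h1 (hpm hp)⟩
  have hpV : p ⊆ V := hpm.trans (hsub m hm)
  have hsplit := card_sdiff_add_card_eq_card hW0Vp
  have hpVc := card_sdiff_of_subset hpV
  have hp2' := hp2
  have hVc := card_le_card hpV
  omega

/-- if the `m`-side star pair is not inside `m` (or there is no star), the side is small. -/
lemma small_side (hE : Free E) (hsub : ∀ e ∈ E, e ⊆ V) (hm : m ∈ E) (hm' : m' ∈ E)
    (hd : m ∩ m' = ∅)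
    (hns : ¬ ∃ p : Finset ℕ, p.card = 2 ∧ p ⊆ m ∧ ∀ e ∈ E, 2 ≤ (e ∩ m).card → p ⊆ e) :
    (E.filter (fun e => 2 ≤ (e ∩ m).card)).card ≤ 4 := by
  classical
  set F := E.filter (fun e => 2 ≤ (e ∩ m).card) with hF
  have hFE : F ⊆ E := filter_subset _ _
  have hFc : ∀ e ∈ F, e.card = 3 := fun e he => hE.card3 e (hFE he)
  have hFint : ∀ e ∈ F, ∀ e' ∈ F, e ≠ e' → 2 ≤ (e ∩ e').card := by
    intro e he e' he' hne
    exact side_twoInt hE hm hm' hd (hFE he) (hFE he')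
      (mem_filter.mp he).2 (mem_filter.mp he').2 hne
  rcases two_int_struct hFc hFint with ⟨q, hq2, hqs⟩ | ⟨Q, hQ4, hQs⟩
  · -- star q, but q ⊄ m, so all thirds lie in m : |F| ≤ 3
    have hqm : ¬ q ⊆ m := by
      intro hqm
      exact hns ⟨q, hq2, hqm, fun e he h2 => hqs e (mem_filter.mpr ⟨he, h2⟩)⟩
    have hthird : ∀ e ∈ F, e \ q ⊆ m := by
      intro e he a ha
      obtain ⟨t, hts, hte, htp⟩ := third_eq (hqs e he) (hFc e he) hq2
      have hta : t = a := by rw [hts, mem_singleton] at ha; exact ha.symm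
      subst hta
      by_contra htm
      -- then e ∩ m ⊆ q ∩ m which has card ≤ 1
      obtain ⟨b, hbq, hbm⟩ := not_subset.mp hqm
      have hsubm : e ∩ m ⊆ q.erase b := by
        intro x hx
        obtain ⟨hxe, hxm⟩ := mem_inter.mp hx
        rw [hte] at hxe
        rcases mem_insert.mp hxe with rfl | hxq
        · exact absurd hxm htm
        · exact mem_erase.mpr ⟨fun h => hbm (h ▸ hxm), hxq⟩
      have h1 := card_le_card hsubm
      rw [card_erase_of_mem hbq, hq2] at h1
      have := (mem_filter.mp he).2
      omega
    have : F.card ≤ m.card := star_count hq2 hFc hqs hthird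
    rw [hE.card3 m hm] at this
    omega
  · exact four_bound hQ4 hFc hQs

/-- The main combinatorial bound. -/
theorem core_bound (hE : Free E) (hsub : ∀ e ∈ E, e ⊆ V) (hm : m ∈ E) (hm' : m' ∈ E)
    (hd : m ∩ m' = ∅) (hV : 6 ≤ V.card) : E.card + 4 ≤ 2 * V.card := by
  classical
  by_cases hs1 : ∃ p : Finset ℕ, p.card = 2 ∧ p ⊆ m ∧ ∀ e ∈ E, 2 ≤ (e ∩ m).card → p ⊆ e
  · obtain ⟨p, hp2, hpm, hstar⟩ := hs1
    exact star_side_bound hE hsub hm hm' hd hV hp2 hpm hstar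
  by_cases hs2 : ∃ p : Finset ℕ, p.card = 2 ∧ p ⊆ m' ∧ ∀ e ∈ E, 2 ≤ (e ∩ m').card → p ⊆ e
  · obtain ⟨p, hp2, hpm, hstar⟩ := hs2
    exact star_side_bound hE hsub hm' hm (by rw [inter_comm]; exact hd) hV hp2 hpm hstar
  -- both sides small
  set E1 := E.filter (fun e => 2 ≤ (e ∩ m).card) with hE1
  set E2 := E.filter (fun e => 2 ≤ (e ∩ m').card) with hE2
  set E0 := E.filter (fun e => e ∩ m = ∅ ∧ e ∩ m' = ∅) with hE0
  have hE0E : E0 ⊆ E := filter_subset _ _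
  have hcover : E ⊆ E1 ∪ E2 ∪ E0 := by
    intro e he
    rcases cover hE hm hm' hd he with h | h | h
    · exact mem_union_left _ (mem_union_left _ (mem_filter.mpr ⟨he, h⟩))
    · exact mem_union_left _ (mem_union_right _ (mem_filter.mpr ⟨he, h⟩))
    · exact mem_union_right _ (mem_filter.mpr ⟨he, h⟩)
  have hcards : E.card ≤ E1.card + E2.card + E0.card :=
    le_trans (card_le_card hcover) (le_trans (card_union_le _ _)
      (by have := card_union_le E1 E2; omega))
  have h1 : E1.card ≤ 4 := small_side hE hsub hm hm' hd hs1
  have h2 : E2.card ≤ 4 := small_side hE hsub hm' hm (by rw [inter_comm]; exact hd) hs2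
  -- |E0| ≤ |V| - 6
  have hc0 : E0.card ≤ (E0.biUnion id).card := E0_bound hE hm hm' hd
  have hW0 : E0.biUnion id ⊆ V \ (m ∪ m') := by
    intro x hx
    obtain ⟨e0, he0, hxe0⟩ := mem_biUnion.mp hx
    have hprop := (mem_filter.mp he0).2
    refine mem_sdiff.mpr ⟨hsub e0 (hE0E he0) hxe0, ?_⟩
    intro hmem
    rcases mem_union.mp hmem with h' | h'
    · exact (notMem_empty x) (hprop.1 ▸ mem_inter.mpr ⟨hxe0, h'⟩)
    · exact (notMem_empty x) (hprop.2 ▸ mem_inter.mpr ⟨hxe0, h'⟩)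
  have hmm'V : m ∪ m' ⊆ V := union_subset (hsub m hm) (hsub m' hm')
  have hmm'c : (m ∪ m').card = 6 := by
    have := card_inter_add_card_union m m'
    rw [hd, card_empty, hE.card3 m hm, hE.card3 m' hm'] at this
    omega
  have hsdiff := card_sdiff_of_subset hmm'V
  have h0 : E0.card ≤ V.card - 6 := by
    have := card_le_card hW0
    omega
  have := card_le_card hmm'V
  omega

end Core2

end TuranAux

namespace TuranAux
open Finset ThreeGraph

lemma mem_mk3 {V : Finset ℕ} {p : Finset ℕ → Prop} {e : Finset ℕ} :
    e ∈ (ThreeGraph.mk3 V p).edges ↔ e ⊆ V ∧ e.card = 3 ∧ p e := by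
  simp only [ThreeGraph.mk3, Finset.mem_filter, Finset.mem_powersetCard]
  tauto

lemma injOn_getD {l : List ℕ} (h : l.Nodup) :
    Set.InjOn (fun i => l.getD i 0) ↑(Finset.range l.length) := by
  intro a ha b hb hab
  simp only [Finset.coe_range, Set.mem_Iio] at ha hb
  simp only [List.getD_eq_getElem?_getD, List.getElem?_eq_getElem ha,
    List.getElem?_eq_getElem hb, Option.getD_some] at hab
  exact List.Nodup.getElem_inj_iff h |>.mp hab

lemma third_of_two {e : Finset ℕ} (he : e.card = 3) {u w : ℕ} (hu : u ∈ e) (hw : w ∈ e)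
    (huw : u ≠ w) : ∃ t, t ≠ u ∧ t ≠ w ∧ e = {u, w, t} := by
  obtain ⟨p, q, hpq, hup, huq, hee⟩ := exists_pair_of_card3 he hu
  have hwpq : w = p ∨ w = q := by
    rw [hee] at hw
    simp only [mem_insert, mem_singleton] at hw
    tauto
  rcases hwpq with rfl | rfl
  · exact ⟨q, fun h => huq h.symm |>.elim, fun h => hpq h.symm |>.elim, by
      rw [hee]⟩
  · exact ⟨p, fun h => hup h.symm |>.elim, hpq, by rw [hee]; ext a; simp; tauto⟩

lemma pathP_verts : pathP.verts = Finset.range 7 := rfl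

lemma mem_pathP_edges {e : Finset ℕ} : e ∈ pathP.edges ↔ e ⊆ Finset.range 7 ∧
    e.card = 3 ∧ (e = {0,1,2} ∨ e = {2,3,4} ∨ e = {4,5,6}) := mem_mk3

lemma triC_verts : triC.verts = Finset.range 6 := rfl

lemma mem_triC_edges {e : Finset ℕ} : e ∈ triC.edges ↔ e ⊆ Finset.range 6 ∧
    e.card = 3 ∧ (e = {0,1,2} ∨ e = {2,3,4} ∨ e = {4,5,0}) := mem_mk3

lemma p2K3_verts : p2K3.verts = Finset.range 8 := rfl

lemma mem_p2K3_edges {e : Finset ℕ} : e ∈ p2K3.edges ↔ e ⊆ Finset.range 8 ∧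
    e.card = 3 ∧ (e = {0,1,2} ∨ e = {2,3,4} ∨ e = {5,6,7}) := mem_mk3

lemma matchM_verts : matchM.verts = Finset.range 6 := rfl

lemma mem_matchM_edges {e : Finset ℕ} : e ∈ matchM.edges ↔ e ⊆ Finset.range 6 ∧
    e.card = 3 ∧ (e = {0,1,2} ∨ e = {3,4,5}) := mem_mk3

section Copies

variable {H : ThreeGraph}

set_option maxHeartbeats 1600000 in
lemma hasCopy_pathP_of {x y z : Finset ℕ} {u w : ℕ}
    (hx : x ∈ H.edges) (hy : y ∈ H.edges) (hz : z ∈ H.edges)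
    (hxy : x ∩ y = {u}) (hyz : y ∩ z = {w}) (hxz : x ∩ z = ∅) : HasCopy pathP H := by
  have hcx := H.card3 x hx
  have hcy := H.card3 y hy
  have hcz := H.card3 z hz
  have hux : u ∈ x := (mem_inter.mp (hxy ▸ mem_singleton_self u)).1
  have huy : u ∈ y := (mem_inter.mp (hxy ▸ mem_singleton_self u)).2
  have hwy : w ∈ y := (mem_inter.mp (hyz ▸ mem_singleton_self w)).1
  have hwz : w ∈ z := (mem_inter.mp (hyz ▸ mem_singleton_self w)).2
  have hdixz : ∀ a, a ∈ x → a ∈ z → False := by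
    intro a h1 h2
    have : a ∈ x ∩ z := mem_inter.mpr ⟨h1, h2⟩
    rw [hxz] at this
    exact notMem_empty a this
  have huw : u ≠ w := fun h => hdixz u hux (h ▸ hwz)
  obtain ⟨x1, x2, hx12, hux1, hux2, hxe⟩ := exists_pair_of_card3 hcx hux
  obtain ⟨z1, z2, hz12, hwz1, hwz2, hze⟩ := exists_pair_of_card3 hcz hwz
  obtain ⟨t, htu, htw, hye⟩ := third_of_two hcy huy hwy huw
  have hx1mem : x1 ∈ x := by rw [hxe]; simp
  have hx2mem : x2 ∈ x := by rw [hxe]; simp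
  have htmem : t ∈ y := by rw [hye]; simp
  have hz1mem : z1 ∈ z := by rw [hze]; simp
  have hz2mem : z2 ∈ z := by rw [hze]; simp
  have hx1y : x1 ∉ y := fun h => hux1 (by
    have : x1 ∈ x ∩ y := mem_inter.mpr ⟨hx1mem, h⟩
    rw [hxy, mem_singleton] at this; exact this.symm)
  have hx2y : x2 ∉ y := fun h => hux2 (by
    have : x2 ∈ x ∩ y := mem_inter.mpr ⟨hx2mem, h⟩
    rw [hxy, mem_singleton] at this; exact this.symm)
  have htx : t ∉ x := fun h => htu (by
    have : t ∈ x ∩ y := mem_inter.mpr ⟨h, htmem⟩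
    rw [hxy, mem_singleton] at this; exact this)
  have htz : t ∉ z := fun h => htw (by
    have : t ∈ y ∩ z := mem_inter.mpr ⟨htmem, h⟩
    rw [hyz, mem_singleton] at this; exact this)
  have hz1y : z1 ∉ y := fun h => hwz1 (by
    have : z1 ∈ y ∩ z := mem_inter.mpr ⟨h, hz1mem⟩
    rw [hyz, mem_singleton] at this; exact this.symm)
  have hz2y : z2 ∉ y := fun h => hwz2 (by
    have : z2 ∈ y ∩ z := mem_inter.mpr ⟨h, hz2mem⟩
    rw [hyz, mem_singleton] at this; exact this.symm)
  have hwx : w ∉ x := fun h => hdixz w h hwz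
  have huz : u ∉ z := fun h => hdixz u hux h
  have d1 : x1 ≠ x2 := hx12
  have d2 : x1 ≠ u := fun h => hux1 h.symm
  have d3 : x1 ≠ t := fun h => htx (h ▸ hx1mem)
  have d4 : x1 ≠ w := fun h => hwx (h ▸ hx1mem)
  have d5 : x1 ≠ z1 := fun h => hdixz x1 hx1mem (h ▸ hz1mem)
  have d6 : x1 ≠ z2 := fun h => hdixz x1 hx1mem (h ▸ hz2mem)
  have d7 : x2 ≠ u := fun h => hux2 h.symm
  have d8 : x2 ≠ t := fun h => htx (h ▸ hx2mem)
  have d9 : x2 ≠ w := fun h => hwx (h ▸ hx2mem)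
  have d10 : x2 ≠ z1 := fun h => hdixz x2 hx2mem (h ▸ hz1mem)
  have d11 : x2 ≠ z2 := fun h => hdixz x2 hx2mem (h ▸ hz2mem)
  have d12 : u ≠ t := fun h => htu h.symm
  have d13 : u ≠ w := huw
  have d14 : u ≠ z1 := fun h => huz (h ▸ hz1mem)
  have d15 : u ≠ z2 := fun h => huz (h ▸ hz2mem)
  have d16 : t ≠ w := htw
  have d17 : t ≠ z1 := fun h => htz (h ▸ hz1mem)
  have d18 : t ≠ z2 := fun h => htz (h ▸ hz2mem)
  have d19 : w ≠ z1 := hwz1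
  have d20 : w ≠ z2 := hwz2
  have d21 : z1 ≠ z2 := hz12
  have hnd : ([x1,x2,u,t,w,z1,z2] : List ℕ).Nodup := by
    simp only [List.nodup_cons, List.mem_cons, List.mem_singleton, List.not_mem_nil,
      List.nodup_nil, not_or, and_true, or_false]
    exact ⟨⟨d1,d2,d3,d4,d5,d6⟩,⟨d7,d8,d9,d10,d11⟩,⟨d12,d13,d14,d15⟩,⟨d16,d17,d18⟩,
      ⟨d19,d20⟩,d21,not_false⟩
  refine ⟨fun i => ([x1,x2,u,t,w,z1,z2] : List ℕ).getD i 0, injOn_getD hnd, ?_, ?_⟩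
  · intro v hv
    rw [pathP_verts] at hv
    have hv' : v < 7 := by simpa using hv
    interval_cases v
    · exact H.sub x hx hx1mem
    · exact H.sub x hx hx2mem
    · exact H.sub x hx hux
    · exact H.sub y hy htmem
    · exact H.sub y hy hwy
    · exact H.sub z hz hz1mem
    · exact H.sub z hz hz2mem
  · intro e he
    have he' := mem_pathP_edges.mp he
    rcases he'.2.2 with rfl | rfl | rfl
    · have h1 : Finset.image (fun i => ([x1,x2,u,t,w,z1,z2] : List ℕ).getD i 0)
          {0,1,2} = {x1, x2, u} := by simp [Finset.image_insert]
      rw [h1]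
      have h2 : ({x1, x2, u} : Finset ℕ) = x := by rw [hxe]; ext a; simp; tauto
      rw [h2]; exact hx
    · have h1 : Finset.image (fun i => ([x1,x2,u,t,w,z1,z2] : List ℕ).getD i 0)
          {2,3,4} = {u, t, w} := by simp [Finset.image_insert]
      rw [h1]
      have h2 : ({u, t, w} : Finset ℕ) = y := by rw [hye]; ext a; simp; tauto
      rw [h2]; exact hy
    · have h1 : Finset.image (fun i => ([x1,x2,u,t,w,z1,z2] : List ℕ).getD i 0)
          {4,5,6} = {w, z1, z2} := by simp [Finset.image_insert]
      rw [h1]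
      rw [← hze]; exact hz

end Copies

end TuranAux

namespace TuranAux
open Finset ThreeGraph

variable {H : ThreeGraph}

set_option maxHeartbeats 1600000 in
lemma hasCopy_triC_of {x y z : Finset ℕ} {u w s : ℕ}
    (hx : x ∈ H.edges) (hy : y ∈ H.edges) (hz : z ∈ H.edges)
    (hxy : x ∩ y = {u}) (hyz : y ∩ z = {w}) (hxz : x ∩ z = {s}) (huw : u ≠ w) :
    HasCopy triC H := by
  have hcx := H.card3 x hx
  have hcy := H.card3 y hy
  have hcz := H.card3 z hz
  have hux : u ∈ x := (mem_inter.mp (hxy ▸ mem_singleton_self u)).1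
  have huy : u ∈ y := (mem_inter.mp (hxy ▸ mem_singleton_self u)).2
  have hwy : w ∈ y := (mem_inter.mp (hyz ▸ mem_singleton_self w)).1
  have hwz : w ∈ z := (mem_inter.mp (hyz ▸ mem_singleton_self w)).2
  have hsx : s ∈ x := (mem_inter.mp (hxz ▸ mem_singleton_self s)).1
  have hsz : s ∈ z := (mem_inter.mp (hxz ▸ mem_singleton_self s)).2
  have hsu : s ≠ u := by
    rintro rfl
    have : s ∈ y ∩ z := mem_inter.mpr ⟨huy, hsz⟩
    rw [hyz, mem_singleton] at this
    exact huw this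
  have hsw : s ≠ w := by
    rintro rfl
    have : s ∈ x ∩ y := mem_inter.mpr ⟨hsx, hwy⟩
    rw [hxy, mem_singleton] at this
    exact huw (this ▸ rfl)
  obtain ⟨x1, hx1s, hx1u, hxe⟩ := third_of_two hcx hsx hux hsu
  obtain ⟨y1, hy1u, hy1w, hye⟩ := third_of_two hcy huy hwy huw
  obtain ⟨z1, hz1w, hz1s, hze⟩ := third_of_two hcz hwz hsz (fun h => hsw h.symm)
  have hx1mem : x1 ∈ x := by rw [hxe]; simp
  have hy1mem : y1 ∈ y := by rw [hye]; simp
  have hz1mem : z1 ∈ z := by rw [hze]; simp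
  have hx1y : x1 ∉ y := fun h => hx1u (by
    have : x1 ∈ x ∩ y := mem_inter.mpr ⟨hx1mem, h⟩
    rw [hxy, mem_singleton] at this; exact this)
  have hx1z : x1 ∉ z := fun h => hx1s (by
    have : x1 ∈ x ∩ z := mem_inter.mpr ⟨hx1mem, h⟩
    rw [hxz, mem_singleton] at this; exact this)
  have hy1x : y1 ∉ x := fun h => hy1u (by
    have : y1 ∈ x ∩ y := mem_inter.mpr ⟨h, hy1mem⟩
    rw [hxy, mem_singleton] at this; exact this)
  have hy1z : y1 ∉ z := fun h => hy1w (by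
    have : y1 ∈ y ∩ z := mem_inter.mpr ⟨hy1mem, h⟩
    rw [hyz, mem_singleton] at this; exact this)
  have hz1x : z1 ∉ x := fun h => hz1s (by
    have : z1 ∈ x ∩ z := mem_inter.mpr ⟨h, hz1mem⟩
    rw [hxz, mem_singleton] at this; exact this)
  have hz1y : z1 ∉ y := fun h => hz1w (by
    have : z1 ∈ y ∩ z := mem_inter.mpr ⟨h, hz1mem⟩
    rw [hyz, mem_singleton] at this; exact this)
  have hsy : s ∉ y := fun h => hsu (by
    have : s ∈ x ∩ y := mem_inter.mpr ⟨hsx, h⟩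
    rw [hxy, mem_singleton] at this; exact this)
  have huz : u ∉ z := fun h => huw (by
    have : u ∈ y ∩ z := mem_inter.mpr ⟨huy, h⟩
    rw [hyz, mem_singleton] at this; exact this)
  have hwx : w ∉ x := fun h => (hsw (by
    have : w ∈ x ∩ z := mem_inter.mpr ⟨h, hwz⟩
    rw [hxz, mem_singleton] at this; exact this.symm)).elim
  -- list [s, x1, u, y1, w, z1]
  have d1 : s ≠ x1 := fun h => hx1s h.symm
  have d2 : s ≠ u := hsu
  have d3 : s ≠ y1 := fun h => hsy (h ▸ hy1mem)
  have d4 : s ≠ w := hsw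
  have d5 : s ≠ z1 := fun h => hz1s h.symm
  have d6 : x1 ≠ u := hx1u
  have d7 : x1 ≠ y1 := fun h => hx1y (h ▸ hy1mem)
  have d8 : x1 ≠ w := fun h => hwx (h ▸ hx1mem)
  have d9 : x1 ≠ z1 := fun h => hx1z (h ▸ hz1mem)
  have d10 : u ≠ y1 := fun h => hy1u h.symm
  have d11 : u ≠ w := huw
  have d12 : u ≠ z1 := fun h => huz (h ▸ hz1mem)
  have d13 : y1 ≠ w := hy1w
  have d14 : y1 ≠ z1 := fun h => hy1z (h ▸ hz1mem)
  have d15 : w ≠ z1 := fun h => hz1w h.symm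
  have hnd : ([s,x1,u,y1,w,z1] : List ℕ).Nodup := by
    simp only [List.nodup_cons, List.mem_cons, List.mem_singleton, List.not_mem_nil,
      List.nodup_nil, not_or, and_true, or_false]
    exact ⟨⟨d1,d2,d3,d4,d5⟩,⟨d6,d7,d8,d9⟩,⟨d10,d11,d12⟩,⟨d13,d14⟩,d15,not_false⟩
  refine ⟨fun i => ([s,x1,u,y1,w,z1] : List ℕ).getD i 0, injOn_getD hnd, ?_, ?_⟩
  · intro v hv
    rw [triC_verts] at hv
    have hv' : v < 6 := by simpa using hv
    interval_cases v
    · exact H.sub x hx hsx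
    · exact H.sub x hx hx1mem
    · exact H.sub x hx hux
    · exact H.sub y hy hy1mem
    · exact H.sub y hy hwy
    · exact H.sub z hz hz1mem
  · intro e he
    have he' := mem_triC_edges.mp he
    rcases he'.2.2 with rfl | rfl | rfl
    · have h1 : Finset.image (fun i => ([s,x1,u,y1,w,z1] : List ℕ).getD i 0)
          {0,1,2} = {s, x1, u} := by simp [Finset.image_insert]
      rw [h1]
      have h2 : ({s, x1, u} : Finset ℕ) = x := by rw [hxe]; ext a; simp; tauto
      rw [h2]; exact hx
    · have h1 : Finset.image (fun i => ([s,x1,u,y1,w,z1] : List ℕ).getD i 0)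
          {2,3,4} = {u, y1, w} := by simp [Finset.image_insert]
      rw [h1]
      have h2 : ({u, y1, w} : Finset ℕ) = y := by rw [hye]; ext a; simp; tauto
      rw [h2]; exact hy
    · have h1 : Finset.image (fun i => ([s,x1,u,y1,w,z1] : List ℕ).getD i 0)
          {4,5,0} = {w, z1, s} := by simp [Finset.image_insert]
      rw [h1]
      have h2 : ({w, z1, s} : Finset ℕ) = z := by rw [hze]; ext a; simp; tauto
      rw [h2]; exact hz

set_option maxHeartbeats 1600000 in
lemma hasCopy_p2K3_of {x y z : Finset ℕ} {u : ℕ}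
    (hx : x ∈ H.edges) (hy : y ∈ H.edges) (hz : z ∈ H.edges)
    (hxy : x ∩ y = {u}) (hzxy : z ∩ (x ∪ y) = ∅) : HasCopy p2K3 H := by
  have hcx := H.card3 x hx
  have hcy := H.card3 y hy
  have hcz := H.card3 z hz
  have hux : u ∈ x := (mem_inter.mp (hxy ▸ mem_singleton_self u)).1
  have huy : u ∈ y := (mem_inter.mp (hxy ▸ mem_singleton_self u)).2
  have hdis : ∀ a, a ∈ z → a ∈ x ∪ y → False := by
    intro a h1 h2
    have : a ∈ z ∩ (x ∪ y) := mem_inter.mpr ⟨h1, h2⟩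
    rw [hzxy] at this
    exact notMem_empty a this
  obtain ⟨x1, x2, hx12, hux1, hux2, hxe⟩ := exists_pair_of_card3 hcx hux
  obtain ⟨y1, y2, hy12, huy1, huy2, hye⟩ := exists_pair_of_card3 hcy huy
  obtain ⟨z1, z2, z3, hz12, hz13, hz23, hze⟩ := Finset.card_eq_three.mp hcz
  have hx1mem : x1 ∈ x := by rw [hxe]; simp
  have hx2mem : x2 ∈ x := by rw [hxe]; simp
  have hy1mem : y1 ∈ y := by rw [hye]; simp
  have hy2mem : y2 ∈ y := by rw [hye]; simp
  have hz1mem : z1 ∈ z := by rw [hze]; simp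
  have hz2mem : z2 ∈ z := by rw [hze]; simp
  have hz3mem : z3 ∈ z := by rw [hze]; simp
  have hx1y : x1 ∉ y := fun h => hux1 (by
    have : x1 ∈ x ∩ y := mem_inter.mpr ⟨hx1mem, h⟩
    rw [hxy, mem_singleton] at this; exact this.symm)
  have hx2y : x2 ∉ y := fun h => hux2 (by
    have : x2 ∈ x ∩ y := mem_inter.mpr ⟨hx2mem, h⟩
    rw [hxy, mem_singleton] at this; exact this.symm)
  have hy1x : y1 ∉ x := fun h => huy1 (by
    have : y1 ∈ x ∩ y := mem_inter.mpr ⟨h, hy1mem⟩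
    rw [hxy, mem_singleton] at this; exact this.symm)
  have hy2x : y2 ∉ x := fun h => huy2 (by
    have : y2 ∈ x ∩ y := mem_inter.mpr ⟨h, hy2mem⟩
    rw [hxy, mem_singleton] at this; exact this.symm)
  have d1 : x1 ≠ x2 := hx12
  have d2 : x1 ≠ u := fun h => hux1 h.symm
  have d3 : x1 ≠ y1 := fun h => hx1y (h ▸ hy1mem)
  have d4 : x1 ≠ y2 := fun h => hx1y (h ▸ hy2mem)
  have d5 : x1 ≠ z1 := fun h => hdis x1 (h ▸ hz1mem) (mem_union_left _ hx1mem)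
  have d6 : x1 ≠ z2 := fun h => hdis x1 (h ▸ hz2mem) (mem_union_left _ hx1mem)
  have d7 : x1 ≠ z3 := fun h => hdis x1 (h ▸ hz3mem) (mem_union_left _ hx1mem)
  have d8 : x2 ≠ u := fun h => hux2 h.symm
  have d9 : x2 ≠ y1 := fun h => hx2y (h ▸ hy1mem)
  have d10 : x2 ≠ y2 := fun h => hx2y (h ▸ hy2mem)
  have d11 : x2 ≠ z1 := fun h => hdis x2 (h ▸ hz1mem) (mem_union_left _ hx2mem)
  have d12 : x2 ≠ z2 := fun h => hdis x2 (h ▸ hz2mem) (mem_union_left _ hx2mem)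
  have d13 : x2 ≠ z3 := fun h => hdis x2 (h ▸ hz3mem) (mem_union_left _ hx2mem)
  have d14 : u ≠ y1 := huy1
  have d15 : u ≠ y2 := huy2
  have d16 : u ≠ z1 := fun h => hdis u (h ▸ hz1mem) (mem_union_left _ hux)
  have d17 : u ≠ z2 := fun h => hdis u (h ▸ hz2mem) (mem_union_left _ hux)
  have d18 : u ≠ z3 := fun h => hdis u (h ▸ hz3mem) (mem_union_left _ hux)
  have d19 : y1 ≠ y2 := hy12
  have d20 : y1 ≠ z1 := fun h => hdis y1 (h ▸ hz1mem) (mem_union_right _ hy1mem)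
  have d21 : y1 ≠ z2 := fun h => hdis y1 (h ▸ hz2mem) (mem_union_right _ hy1mem)
  have d22 : y1 ≠ z3 := fun h => hdis y1 (h ▸ hz3mem) (mem_union_right _ hy1mem)
  have d23 : y2 ≠ z1 := fun h => hdis y2 (h ▸ hz1mem) (mem_union_right _ hy2mem)
  have d24 : y2 ≠ z2 := fun h => hdis y2 (h ▸ hz2mem) (mem_union_right _ hy2mem)
  have d25 : y2 ≠ z3 := fun h => hdis y2 (h ▸ hz3mem) (mem_union_right _ hy2mem)
  have hnd : ([x1,x2,u,y1,y2,z1,z2,z3] : List ℕ).Nodup := by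
    simp only [List.nodup_cons, List.mem_cons, List.mem_singleton, List.not_mem_nil,
      List.nodup_nil, not_or, and_true, or_false]
    exact ⟨⟨d1,d2,d3,d4,d5,d6,d7⟩,⟨d8,d9,d10,d11,d12,d13⟩,⟨d14,d15,d16,d17,d18⟩,
      ⟨d19,d20,d21,d22⟩,⟨d23,d24,d25⟩,⟨hz12,hz13⟩,hz23,not_false⟩
  refine ⟨fun i => ([x1,x2,u,y1,y2,z1,z2,z3] : List ℕ).getD i 0, injOn_getD hnd, ?_, ?_⟩
  · intro v hv
    rw [p2K3_verts] at hv
    have hv' : v < 8 := by simpa using hv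
    interval_cases v
    · exact H.sub x hx hx1mem
    · exact H.sub x hx hx2mem
    · exact H.sub x hx hux
    · exact H.sub y hy hy1mem
    · exact H.sub y hy hy2mem
    · exact H.sub z hz hz1mem
    · exact H.sub z hz hz2mem
    · exact H.sub z hz hz3mem
  · intro e he
    have he' := mem_p2K3_edges.mp he
    rcases he'.2.2 with rfl | rfl | rfl
    · have h1 : Finset.image (fun i => ([x1,x2,u,y1,y2,z1,z2,z3] : List ℕ).getD i 0)
          {0,1,2} = {x1, x2, u} := by simp [Finset.image_insert]
      rw [h1]
      have h2 : ({x1, x2, u} : Finset ℕ) = x := by rw [hxe]; ext a; simp; tauto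
      rw [h2]; exact hx
    · have h1 : Finset.image (fun i => ([x1,x2,u,y1,y2,z1,z2,z3] : List ℕ).getD i 0)
          {2,3,4} = {u, y1, y2} := by simp [Finset.image_insert]
      rw [h1]
      rw [← hye]; exact hy
    · have h1 : Finset.image (fun i => ([x1,x2,u,y1,y2,z1,z2,z3] : List ℕ).getD i 0)
          {5,6,7} = {z1, z2, z3} := by simp [Finset.image_insert]
      rw [h1]
      rw [← hze]; exact hz

/-- From a copy of `matchM` extract two disjoint edges. -/
lemma exists_M_of (h : HasCopy matchM H) :
    ∃ m ∈ H.edges, ∃ m' ∈ H.edges, m ∩ m' = ∅ := by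
  obtain ⟨f, hinj, hverts, hedges⟩ := h
  have h1 : ({0,1,2} : Finset ℕ) ∈ matchM.edges :=
    mem_matchM_edges.mpr ⟨by decide, by decide, Or.inl rfl⟩
  have h2 : ({3,4,5} : Finset ℕ) ∈ matchM.edges :=
    mem_matchM_edges.mpr ⟨by decide, by decide, Or.inr rfl⟩
  refine ⟨Finset.image f {0,1,2}, hedges _ h1, Finset.image f {3,4,5}, hedges _ h2, ?_⟩
  have hsub : (({0,1,2} : Finset ℕ) ∪ {3,4,5} : Finset ℕ) ⊆ Finset.range 6 := by decide
  have hinj' : Set.InjOn f (↑({0,1,2} : Finset ℕ) ∪ ↑({3,4,5} : Finset ℕ)) := by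
    apply Set.InjOn.mono _ hinj
    rw [matchM_verts, ← Finset.coe_union]
    exact_mod_cast hsub
  rw [← Finset.image_inter_of_injOn _ _ hinj']
  have : (({0,1,2} : Finset ℕ) ∩ {3,4,5}) = ∅ := by decide
  rw [this, Finset.image_empty]

/-- The freeness bundle from the absence of copies. -/
lemma free_of (hP : ¬ HasCopy pathP H) (hC : ¬ HasCopy triC H)
    (hK : ¬ HasCopy p2K3 H) : Free H.edges := by
  refine ⟨H.card3, ?_, ?_, ?_⟩
  · intro x hx y hy z hz u w hxy hyz hxz
    exact hP (hasCopy_pathP_of hx hy hz hxy hyz hxz)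
  · intro x hx y hy z hz u w s hxy hyz hxz huw
    exact hC (hasCopy_triC_of hx hy hz hxy hyz hxz huw)
  · intro x hx y hy z hz u hxy hzxy
    exact hK (hasCopy_p2K3_of hx hy hz hxy hzxy)

end TuranAux

namespace TuranAux
open Finset ThreeGraph

/-- The extremal example: all triples containing `{0,1}` or `{2,3}`. -/
noncomputable def extremal (n : ℕ) : ThreeGraph :=
  ThreeGraph.mk3 (Finset.range n)
    (fun e => ({0,1} : Finset ℕ) ⊆ e ∨ ({2,3} : Finset ℕ) ⊆ e)

lemma mem_extremal {n : ℕ} {e : Finset ℕ} : e ∈ (extremal n).edges ↔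
    e ⊆ Finset.range n ∧ e.card = 3 ∧
    (({0,1} : Finset ℕ) ⊆ e ∨ ({2,3} : Finset ℕ) ⊆ e) := mem_mk3

lemma extremal_verts (n : ℕ) : (extremal n).verts = Finset.range n := rfl

lemma conflict_singleton {p x y : Finset ℕ} {v : ℕ} (hp : p.card = 2)
    (h1 : p ⊆ x) (h2 : p ⊆ y) (hxy : x ∩ y = {v}) : False := by
  have hs : p ⊆ {v} := hxy ▸ subset_inter h1 h2
  have := card_le_card hs
  simp [hp] at this

lemma conflict_empty {p x y : Finset ℕ} (hp : p.card = 2)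
    (h1 : p ⊆ x) (h2 : p ⊆ y) (hxy : x ∩ y = ∅) : False := by
  have hs : p ⊆ ∅ := hxy ▸ subset_inter h1 h2
  have := card_le_card hs
  simp [hp] at this

lemma image_inter_three {f : ℕ → ℕ} {N : ℕ} (hinj : Set.InjOn f ↑(Finset.range N))
    {A B : Finset ℕ} (hA : A ⊆ Finset.range N) (hB : B ⊆ Finset.range N) :
    (A.image f) ∩ (B.image f) = (A ∩ B).image f := by
  rw [Finset.image_inter_of_injOn]
  apply Set.InjOn.mono _ hinj
  rw [← Finset.coe_union]
  exact_mod_cast union_subset hA hB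

lemma extremal_noP (n : ℕ) : ¬ HasCopy pathP (extremal n) := by
  rintro ⟨f, hinj, hverts, hedges⟩
  rw [pathP_verts] at hinj
  have h1 : ({0,1,2} : Finset ℕ) ∈ pathP.edges :=
    mem_pathP_edges.mpr ⟨by decide, by decide, Or.inl rfl⟩
  have h2 : ({2,3,4} : Finset ℕ) ∈ pathP.edges :=
    mem_pathP_edges.mpr ⟨by decide, by decide, Or.inr (Or.inl rfl)⟩
  have h3 : ({4,5,6} : Finset ℕ) ∈ pathP.edges :=
    mem_pathP_edges.mpr ⟨by decide, by decide, Or.inr (Or.inr rfl)⟩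
  have px := (mem_extremal.mp (hedges _ h1)).2.2
  have py := (mem_extremal.mp (hedges _ h2)).2.2
  have pz := (mem_extremal.mp (hedges _ h3)).2.2
  have hxy : (Finset.image f {0,1,2}) ∩ (Finset.image f {2,3,4}) = {f 2} := by
    rw [image_inter_three hinj (by decide) (by decide)]
    have : (({0,1,2} : Finset ℕ) ∩ {2,3,4}) = {2} := by decide
    rw [this, Finset.image_singleton]
  have hyz : (Finset.image f {2,3,4}) ∩ (Finset.image f {4,5,6}) = {f 4} := by
    rw [image_inter_three hinj (by decide) (by decide)]
    have : (({2,3,4} : Finset ℕ) ∩ {4,5,6}) = {4} := by decide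
    rw [this, Finset.image_singleton]
  have hxz : (Finset.image f {0,1,2}) ∩ (Finset.image f {4,5,6}) = ∅ := by
    rw [image_inter_three hinj (by decide) (by decide)]
    have : (({0,1,2} : Finset ℕ) ∩ {4,5,6}) = ∅ := by decide
    rw [this, Finset.image_empty]
  have hc2 : ({0,1} : Finset ℕ).card = 2 := by decide
  have hc2' : ({2,3} : Finset ℕ).card = 2 := by decide
  rcases px with p1 | p1 <;> rcases py with p2 | p2 <;> rcases pz with p3 | p3
  · exact conflict_singleton hc2 p1 p2 hxy
  · exact conflict_singleton hc2 p1 p2 hxy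
  · exact conflict_empty hc2 p1 p3 hxz
  · exact conflict_singleton hc2' p2 p3 hyz
  · exact conflict_singleton hc2 p2 p3 hyz
  · exact conflict_empty hc2' p1 p3 hxz
  · exact conflict_singleton hc2' p1 p2 hxy
  · exact conflict_singleton hc2' p1 p2 hxy

lemma extremal_noC (n : ℕ) : ¬ HasCopy triC (extremal n) := by
  rintro ⟨f, hinj, hverts, hedges⟩
  rw [triC_verts] at hinj
  have h1 : ({0,1,2} : Finset ℕ) ∈ triC.edges :=
    mem_triC_edges.mpr ⟨by decide, by decide, Or.inl rfl⟩
  have h2 : ({2,3,4} : Finset ℕ) ∈ triC.edges :=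
    mem_triC_edges.mpr ⟨by decide, by decide, Or.inr (Or.inl rfl)⟩
  have h3 : ({4,5,0} : Finset ℕ) ∈ triC.edges :=
    mem_triC_edges.mpr ⟨by decide, by decide, Or.inr (Or.inr rfl)⟩
  have px := (mem_extremal.mp (hedges _ h1)).2.2
  have py := (mem_extremal.mp (hedges _ h2)).2.2
  have pz := (mem_extremal.mp (hedges _ h3)).2.2
  have hxy : (Finset.image f {0,1,2}) ∩ (Finset.image f {2,3,4}) = {f 2} := by
    rw [image_inter_three hinj (by decide) (by decide)]
    have : (({0,1,2} : Finset ℕ) ∩ {2,3,4}) = {2} := by decide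
    rw [this, Finset.image_singleton]
  have hyz : (Finset.image f {2,3,4}) ∩ (Finset.image f {4,5,0}) = {f 4} := by
    rw [image_inter_three hinj (by decide) (by decide)]
    have : (({2,3,4} : Finset ℕ) ∩ {4,5,0}) = {4} := by decide
    rw [this, Finset.image_singleton]
  have hxz : (Finset.image f {0,1,2}) ∩ (Finset.image f {4,5,0}) = {f 0} := by
    rw [image_inter_three hinj (by decide) (by decide)]
    have : (({0,1,2} : Finset ℕ) ∩ {4,5,0}) = {0} := by decide
    rw [this, Finset.image_singleton]
  have hc2 : ({0,1} : Finset ℕ).card = 2 := by decide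
  have hc2' : ({2,3} : Finset ℕ).card = 2 := by decide
  rcases px with p1 | p1 <;> rcases py with p2 | p2 <;> rcases pz with p3 | p3
  · exact conflict_singleton hc2 p1 p2 hxy
  · exact conflict_singleton hc2 p1 p2 hxy
  · exact conflict_singleton hc2 p1 p3 hxz
  · exact conflict_singleton hc2' p2 p3 hyz
  · exact conflict_singleton hc2 p2 p3 hyz
  · exact conflict_singleton hc2' p1 p3 hxz
  · exact conflict_singleton hc2' p1 p2 hxy
  · exact conflict_singleton hc2' p1 p2 hxy

lemma extremal_noPK (n : ℕ) : ¬ HasCopy p2K3 (extremal n) := by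
  rintro ⟨f, hinj, hverts, hedges⟩
  rw [p2K3_verts] at hinj
  have h1 : ({0,1,2} : Finset ℕ) ∈ p2K3.edges :=
    mem_p2K3_edges.mpr ⟨by decide, by decide, Or.inl rfl⟩
  have h2 : ({2,3,4} : Finset ℕ) ∈ p2K3.edges :=
    mem_p2K3_edges.mpr ⟨by decide, by decide, Or.inr (Or.inl rfl)⟩
  have h3 : ({5,6,7} : Finset ℕ) ∈ p2K3.edges :=
    mem_p2K3_edges.mpr ⟨by decide, by decide, Or.inr (Or.inr rfl)⟩
  have px := (mem_extremal.mp (hedges _ h1)).2.2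
  have py := (mem_extremal.mp (hedges _ h2)).2.2
  have pz := (mem_extremal.mp (hedges _ h3)).2.2
  have hxy : (Finset.image f {0,1,2}) ∩ (Finset.image f {2,3,4}) = {f 2} := by
    rw [image_inter_three hinj (by decide) (by decide)]
    have : (({0,1,2} : Finset ℕ) ∩ {2,3,4}) = {2} := by decide
    rw [this, Finset.image_singleton]
  have hxz : (Finset.image f {0,1,2}) ∩ (Finset.image f {5,6,7}) = ∅ := by
    rw [image_inter_three hinj (by decide) (by decide)]
    have : (({0,1,2} : Finset ℕ) ∩ {5,6,7}) = ∅ := by decide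
    rw [this, Finset.image_empty]
  have hyz : (Finset.image f {2,3,4}) ∩ (Finset.image f {5,6,7}) = ∅ := by
    rw [image_inter_three hinj (by decide) (by decide)]
    have : (({2,3,4} : Finset ℕ) ∩ {5,6,7}) = ∅ := by decide
    rw [this, Finset.image_empty]
  have hc2 : ({0,1} : Finset ℕ).card = 2 := by decide
  have hc2' : ({2,3} : Finset ℕ).card = 2 := by decide
  rcases px with p1 | p1 <;> rcases py with p2 | p2 <;> rcases pz with p3 | p3
  · exact conflict_singleton hc2 p1 p2 hxy
  · exact conflict_singleton hc2 p1 p2 hxy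
  · exact conflict_empty hc2 p1 p3 hxz
  · exact conflict_empty hc2' p2 p3 hyz
  · exact conflict_empty hc2 p2 p3 hyz
  · exact conflict_empty hc2' p1 p3 hxz
  · exact conflict_singleton hc2' p1 p2 hxy
  · exact conflict_singleton hc2' p1 p2 hxy

lemma extremal_hasM {n : ℕ} (hn : 6 ≤ n) : HasCopy matchM (extremal n) := by
  have hnd : ([0,1,4,2,3,5] : List ℕ).Nodup := by decide
  refine ⟨fun i => ([0,1,4,2,3,5] : List ℕ).getD i 0, injOn_getD hnd, ?_, ?_⟩
  · intro v hv
    rw [matchM_verts] at hv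
    rw [extremal_verts]
    have hv' : v < 6 := by simpa using hv
    interval_cases v <;> simp <;> omega
  · intro e he
    have he' := mem_matchM_edges.mp he
    rcases he'.2.2 with rfl | rfl
    · have h1 : Finset.image (fun i => ([0,1,4,2,3,5] : List ℕ).getD i 0)
          {0,1,2} = {0, 1, 4} := by simp [Finset.image_insert]
      rw [h1]
      refine mem_extremal.mpr ⟨?_, by decide, Or.inl (by decide)⟩
      intro a ha
      simp only [mem_insert, mem_singleton] at ha
      rw [mem_range]
      rcases ha with rfl | rfl | rfl <;> omega
    · have h1 : Finset.image (fun i => ([0,1,4,2,3,5] : List ℕ).getD i 0)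
          {3,4,5} = {2, 3, 5} := by simp [Finset.image_insert]
      rw [h1]
      refine mem_extremal.mpr ⟨?_, by decide, Or.inr (by decide)⟩
      intro a ha
      simp only [mem_insert, mem_singleton] at ha
      rw [mem_range]
      rcases ha with rfl | rfl | rfl <;> omega

lemma extremal_card {n : ℕ} (hn : 6 ≤ n) : (extremal n).edges.card = 2 * n - 4 := by
  classical
  set A := (Finset.range n \ {0,1}).image (fun x => insert x ({0,1} : Finset ℕ)) with hA
  set B := (Finset.range n \ {2,3}).image (fun x => insert x ({2,3} : Finset ℕ)) with hB
  have hsub01 : ({0,1} : Finset ℕ) ⊆ Finset.range n := by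
    intro a ha; simp only [mem_insert, mem_singleton] at ha; rw [mem_range]
    rcases ha with rfl | rfl <;> omega
  have hsub23 : ({2,3} : Finset ℕ) ⊆ Finset.range n := by
    intro a ha; simp only [mem_insert, mem_singleton] at ha; rw [mem_range]
    rcases ha with rfl | rfl <;> omega
  have hedges : (extremal n).edges = A ∪ B := by
    ext e
    rw [mem_extremal, mem_union]
    constructor
    · rintro ⟨hsub, hcard, hp | hp⟩
      · left
        obtain ⟨t, hts, hte, htp⟩ := third_eq hp hcard (by decide)
        refine mem_image.mpr ⟨t, mem_sdiff.mpr ⟨hsub (by rw [hte]; simp), htp⟩, hte.symm⟩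
      · right
        obtain ⟨t, hts, hte, htp⟩ := third_eq hp hcard (by decide)
        refine mem_image.mpr ⟨t, mem_sdiff.mpr ⟨hsub (by rw [hte]; simp), htp⟩, hte.symm⟩
    · rintro (hmem | hmem)
      · obtain ⟨t, ht, rfl⟩ := mem_image.mp hmem
        obtain ⟨htn, htp⟩ := mem_sdiff.mp ht
        exact ⟨insert_subset htn hsub01, by rw [card_insert_of_notMem htp]; decide,
          Or.inl (subset_insert _ _)⟩
      · obtain ⟨t, ht, rfl⟩ := mem_image.mp hmem
        obtain ⟨htn, htp⟩ := mem_sdiff.mp ht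
        exact ⟨insert_subset htn hsub23, by rw [card_insert_of_notMem htp]; decide,
          Or.inr (subset_insert _ _)⟩
  have hinjA : ∀ x ∈ Finset.range n \ {0,1}, ∀ y ∈ Finset.range n \ {0,1},
      insert x ({0,1} : Finset ℕ) = insert y ({0,1} : Finset ℕ) → x = y := by
    intro x hx y hy hxy
    have hx' := (mem_sdiff.mp hx).2
    have hy' := (mem_sdiff.mp hy).2
    have : x ∈ insert y ({0,1} : Finset ℕ) := hxy ▸ mem_insert_self x _
    rcases mem_insert.mp this with h | h
    · exact h
    · exact absurd h hx'
  have hinjB : ∀ x ∈ Finset.range n \ {2,3}, ∀ y ∈ Finset.range n \ {2,3},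
      insert x ({2,3} : Finset ℕ) = insert y ({2,3} : Finset ℕ) → x = y := by
    intro x hx y hy hxy
    have hx' := (mem_sdiff.mp hx).2
    have hy' := (mem_sdiff.mp hy).2
    have : x ∈ insert y ({2,3} : Finset ℕ) := hxy ▸ mem_insert_self x _
    rcases mem_insert.mp this with h | h
    · exact h
    · exact absurd h hx'
  have hcA : A.card = n - 2 := by
    rw [hA, Finset.card_image_of_injOn hinjA, card_sdiff_of_subset hsub01, card_range]
    rfl
  have hcB : B.card = n - 2 := by
    rw [hB, Finset.card_image_of_injOn hinjB, card_sdiff_of_subset hsub23, card_range]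
    rfl
  have hdisj : Disjoint A B := by
    rw [Finset.disjoint_left]
    intro e heA heB
    obtain ⟨t, ht, rfl⟩ := mem_image.mp heA
    obtain ⟨t', ht', he'⟩ := mem_image.mp heB
    have h4 : ({0,1,2,3} : Finset ℕ) ⊆ insert t ({0,1} : Finset ℕ) := by
      intro a ha
      simp only [mem_insert, mem_singleton] at ha
      rcases ha with rfl | rfl | rfl | rfl
      · simp
      · simp
      · rw [← he']; simp
      · rw [← he']; simp
    have hle := card_le_card h4
    have hc3 : (insert t ({0,1} : Finset ℕ)).card = 3 := by
      rw [card_insert_of_notMem (mem_sdiff.mp ht).2]; rfl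
    rw [hc3] at hle
    have : ({0,1,2,3} : Finset ℕ).card = 4 := by decide
    omega
  rw [hedges, card_union_of_disjoint hdisj, hcA, hcB]
  omega

end TuranAux

/-- `ex(n;{P, C, P₂ ∪ K₃}|M) = 2n − 4` for every `n ≥ 6`. -/
theorem conditional_turan_PCP2K3_M (n : ℕ) (hn : 6 ≤ n) :
    (∀ H : ThreeGraph, H.verts.card = n → ¬ HasCopy pathP H → ¬ HasCopy triC H →
      ¬ HasCopy p2K3 H → HasCopy matchM H → H.edges.card ≤ 2 * n - 4) ∧
    (∃ H : ThreeGraph, H.verts.card = n ∧ ¬ HasCopy pathP H ∧ ¬ HasCopy triC H ∧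
      ¬ HasCopy p2K3 H ∧ HasCopy matchM H ∧ H.edges.card = 2 * n - 4) := by
  constructor
  · intro H hcard hP hC hK hM
    obtain ⟨m, hm, m', hm', hd⟩ := TuranAux.exists_M_of hM
    have hfree := TuranAux.free_of hP hC hK
    have hb := TuranAux.core_bound hfree H.sub hm hm' hd (by rw [hcard]; exact hn)
    rw [hcard] at hb
    omega
  · exact ⟨TuranAux.extremal n, by rw [TuranAux.extremal_verts]; exact Finset.card_range n,
      TuranAux.extremal_noP n, TuranAux.extremal_noC n, TuranAux.extremal_noPK n,
      TuranAux.extremal_hasM hn, TuranAux.extremal_card hn⟩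
end

section
/- Setup: let H be an n-vertex {P,C}-free 3-graph on vertex set V containing a copy of P_2 ∪ K_3; let Q be a copy of P_2 in H such that at least one edge of H is disjoint from U := V(Q), and let x be the vertex of degree two in Q; put W = V ∖ U, let W_0 be the set of vertices of W lying in no edge of H[W] with s = |W_0| ≥ 1, let W_1 = W ∖ W_0, let H_1 be the set of edges of H intersecting both U and W_1, and let F^2_1 = {h ∈ H_1 : |(h ∩ U) ∖ {x}| = 2}. If F^2_1 ≠ ∅, then: |H[U ∪ W_0]| ≤ 8 for s = 1; |H[U ∪ W_0]| ≤ 3s + 7 for 2 ≤ s ≤ 4; and |H[U ∪ W_0]| ≤ binom(s+2,2) + 1 for s ≥ 5. -/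
-- ===== auxiliary development =====

set_option linter.unusedVariables false
set_option maxHeartbeats 1000000

namespace ThreeGraph

lemma mem_mk3_edges (V : Finset ℕ) (p : Finset ℕ → Prop) (e : Finset ℕ) :
    e ∈ (mk3 V p).edges ↔ (e ⊆ V ∧ e.card = 3) ∧ p e := by
  letI := Classical.decPred p
  show e ∈ (V.powersetCard 3).filter p ↔ _
  rw [Finset.mem_filter, Finset.mem_powersetCard]

lemma mk3_verts (V : Finset ℕ) (p : Finset ℕ → Prop) : (mk3 V p).verts = V := rfl

lemma split3 (E : Finset ℕ) (hE : E.card = 3) (p : ℕ) (hp : p ∈ E) :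
    ∃ x y, x ≠ y ∧ x ∈ E ∧ y ∈ E ∧ x ≠ p ∧ y ≠ p ∧ E = insert p {x, y} := by
  have h2 : (E.erase p).card = 2 := by
    rw [Finset.card_erase_of_mem hp, hE]
  obtain ⟨x, y, hxy, hxyeq⟩ := Finset.card_eq_two.mp h2
  have hx : x ∈ E.erase p := hxyeq ▸ (by simp)
  have hy : y ∈ E.erase p := hxyeq ▸ (by simp)
  refine ⟨x, y, hxy, Finset.mem_of_mem_erase hx, Finset.mem_of_mem_erase hy,
    Finset.ne_of_mem_erase hx, Finset.ne_of_mem_erase hy, ?_⟩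
  rw [← hxyeq, Finset.insert_erase hp]

lemma split3mid (E : Finset ℕ) (hE : E.card = 3) (p q : ℕ) (hp : p ∈ E) (hq : q ∈ E)
    (hpq : p ≠ q) : ∃ x, x ∈ E ∧ x ≠ p ∧ x ≠ q ∧ E = {p, q, x} := by
  have h1 : ((E.erase p).erase q).card = 1 := by
    rw [Finset.card_erase_of_mem, Finset.card_erase_of_mem hp, hE]
    exact Finset.mem_erase.mpr ⟨hpq.symm, hq⟩
  obtain ⟨x, hxeq⟩ := Finset.card_eq_one.mp h1
  have hx : x ∈ (E.erase p).erase q := hxeq ▸ (by simp)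
  have hxE : x ∈ E := Finset.mem_of_mem_erase (Finset.mem_of_mem_erase hx)
  have hxq : x ≠ q := Finset.ne_of_mem_erase hx
  have hxp : x ≠ p := Finset.ne_of_mem_erase (Finset.mem_of_mem_erase hx)
  refine ⟨x, hxE, hxp, hxq, ?_⟩
  have : E = insert p (insert q {x}) := by
    rw [← hxeq, Finset.insert_erase (Finset.mem_erase.mpr ⟨hpq.symm, hq⟩),
      Finset.insert_erase hp]
  simpa using this

def seq7 (a0 a1 a2 a3 a4 a5 a6 : ℕ) : ℕ → ℕ := fun i =>
  if i = 0 then a0 else if i = 1 then a1 else if i = 2 then a2 else if i = 3 then a3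
  else if i = 4 then a4 else if i = 5 then a5 else a6

@[simp] lemma seq7_0 (a0 a1 a2 a3 a4 a5 a6 : ℕ) : seq7 a0 a1 a2 a3 a4 a5 a6 0 = a0 := rfl
@[simp] lemma seq7_1 (a0 a1 a2 a3 a4 a5 a6 : ℕ) : seq7 a0 a1 a2 a3 a4 a5 a6 1 = a1 := rfl
@[simp] lemma seq7_2 (a0 a1 a2 a3 a4 a5 a6 : ℕ) : seq7 a0 a1 a2 a3 a4 a5 a6 2 = a2 := rfl
@[simp] lemma seq7_3 (a0 a1 a2 a3 a4 a5 a6 : ℕ) : seq7 a0 a1 a2 a3 a4 a5 a6 3 = a3 := rfl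
@[simp] lemma seq7_4 (a0 a1 a2 a3 a4 a5 a6 : ℕ) : seq7 a0 a1 a2 a3 a4 a5 a6 4 = a4 := rfl
@[simp] lemma seq7_5 (a0 a1 a2 a3 a4 a5 a6 : ℕ) : seq7 a0 a1 a2 a3 a4 a5 a6 5 = a5 := rfl
@[simp] lemma seq7_6 (a0 a1 a2 a3 a4 a5 a6 : ℕ) : seq7 a0 a1 a2 a3 a4 a5 a6 6 = a6 := rfl

lemma image3 (f : ℕ → ℕ) (i j k : ℕ) : (({i,j,k} : Finset ℕ)).image f = {f i, f j, f k} := by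
  simp [Finset.image_insert]

/-- Build a copy of P from three edges with the loose-path intersection pattern. -/
lemma hasCopy_pathP_of (H : ThreeGraph) (E1 E2 E3 : Finset ℕ)
    (h1 : E1 ∈ H.edges) (h2 : E2 ∈ H.edges) (h3 : E3 ∈ H.edges)
    (c q : ℕ) (h12 : E1 ∩ E2 = {c}) (h23 : E2 ∩ E3 = {q}) (hcq : c ≠ q)
    (h13 : E1 ∩ E3 = ∅) : HasCopy pathP H := by
  have hc1 : c ∈ E1 := (Finset.mem_inter.mp (h12 ▸ Finset.mem_singleton_self c)).1
  have hc2 : c ∈ E2 := (Finset.mem_inter.mp (h12 ▸ Finset.mem_singleton_self c)).2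
  have hq2 : q ∈ E2 := (Finset.mem_inter.mp (h23 ▸ Finset.mem_singleton_self q)).1
  have hq3 : q ∈ E3 := (Finset.mem_inter.mp (h23 ▸ Finset.mem_singleton_self q)).2
  obtain ⟨x0, x1, hx01, hx0E, hx1E, hx0c, hx1c, hE1⟩ := split3 E1 (H.card3 _ h1) c hc1
  obtain ⟨x3, hx3E, hx3c, hx3q, hE2⟩ := split3mid E2 (H.card3 _ h2) c q hc2 hq2 hcq
  obtain ⟨x5, x6, hx56, hx5E, hx6E, hx5q, hx6q, hE3⟩ := split3 E3 (H.card3 _ h3) q hq3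
  set fn : ℕ → ℕ := seq7 x0 x1 c x3 q x5 x6 with hfn
  have himg1 : (({0,1,2} : Finset ℕ)).image fn = E1 := by
    rw [image3, hfn, seq7_0, seq7_1, seq7_2, hE1]
    all_goals { ext z; simp <;> tauto }
  have himg2 : (({2,3,4} : Finset ℕ)).image fn = E2 := by
    rw [image3, hfn, seq7_2, seq7_3, seq7_4, hE2]
    all_goals { ext z; simp <;> tauto }
  have himg3 : (({4,5,6} : Finset ℕ)).image fn = E3 := by
    rw [image3, hfn, seq7_4, seq7_5, seq7_6, hE3]
    all_goals { ext z; simp <;> tauto }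
  have hrange : Finset.range 7 =
      ({0,1,2} : Finset ℕ) ∪ (({2,3,4} : Finset ℕ) ∪ ({4,5,6} : Finset ℕ)) := by decide
  have himg : (Finset.range 7).image fn = E1 ∪ (E2 ∪ E3) := by
    rw [hrange, Finset.image_union, Finset.image_union, himg1, himg2, himg3]
  have hcard23 : (E2 ∪ E3).card = 5 := by
    have := Finset.card_union_add_card_inter E2 E3
    rw [h23, H.card3 _ h2, H.card3 _ h3] at this
    simpa using this
  have hint : E1 ∩ (E2 ∪ E3) = {c} := by
    rw [Finset.inter_union_distrib_left, h12, h13]; simp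
  have hcard : (E1 ∪ (E2 ∪ E3)).card = 7 := by
    have := Finset.card_union_add_card_inter E1 (E2 ∪ E3)
    rw [hint, H.card3 _ h1, hcard23] at this
    simpa using this
  have hinj : Set.InjOn fn ↑(Finset.range 7) :=
    Finset.injOn_of_card_image_eq (by rw [himg, hcard, Finset.card_range])
  refine ⟨fn, by rw [pathP, mk3_verts]; exact hinj, ?_, ?_⟩
  · intro i hi
    rw [pathP, mk3_verts] at hi
    have : fn i ∈ E1 ∪ (E2 ∪ E3) := himg ▸ Finset.mem_image_of_mem fn hi
    rcases Finset.mem_union.mp this with h | h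
    · exact H.sub _ h1 h
    · rcases Finset.mem_union.mp h with h | h
      · exact H.sub _ h2 h
      · exact H.sub _ h3 h
  · intro e he
    rw [pathP, mem_mk3_edges] at he
    rcases he.2 with rfl | rfl | rfl
    · rw [himg1]; exact h1
    · rw [himg2]; exact h2
    · rw [himg3]; exact h3


end ThreeGraph

lemma two_mul_choose_two (n : ℕ) : 2 * n.choose 2 = n * (n - 1) := by
  induction n with
  | zero => simp
  | succ k ih =>
    have h : (k + 1).choose 2 = k.choose 1 + k.choose 2 := Nat.choose_succ_succ k 1
    have h2 : (k + 1) * (k + 1 - 1) = k * (k - 1) + 2 * k := by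
      cases k with
      | zero => simp
      | succ j =>
        simp only [Nat.succ_sub_one]
        ring
    rw [h, Nat.choose_one_right, h2, Nat.mul_add, ← ih]
    ring

lemma AR1 {n k : ℕ} (hn : 3 ≤ n) (hk : k ≤ n) : k + (n - k).choose 2 ≤ n.choose 2 := by
  have h1 := two_mul_choose_two n
  have h2 := two_mul_choose_two (n - k)
  have e1 : n - k + k = n := Nat.sub_add_cancel hk
  set j := n - k with hj
  -- 2*(k + j.choose 2) ≤ 2*(n.choose 2)  i.e. 2k + j(j-1) ≤ n(n-1)
  have key : 2 * k + j * (j - 1) ≤ n * (n - 1) := by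
    have hjn : j ≤ n := by omega
    rcases Nat.eq_zero_or_pos j with hj0 | hjpos
    · -- j = 0: k = n: 2n ≤ n(n-1), n ≥ 3
      rw [hj0]; simp
      have hkn : k = n := by omega
      subst hkn
      have h2' : 2 ≤ k - 1 := by omega
      calc 2 * k ≤ (k - 1) * k := Nat.mul_le_mul_right k h2'
        _ = k * (k - 1) := Nat.mul_comm _ _
    · have hj1 : 1 ≤ j := hjpos
      have : j * (j - 1) + 2 * k ≤ n * (n - 1) := by
        have hx : n * (n-1) = (j + k) * (j + k - 1) := by rw [e1]
        rw [hx]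
        rcases Nat.eq_zero_or_pos k with hk0 | hkpos
        · simp [hk0]
        · have h3 : j + k - 1 = j + (k - 1) := by omega
          rw [h3]
          have : j * (j - 1) ≤ j * (j + (k-1)) := Nat.mul_le_mul_left _ (by omega)
          have h4 : (j + k) * (j + (k - 1)) = j * (j + (k-1)) + k * (j + (k-1)) := by ring
          have h5 : 2 * k ≤ k * (j + (k - 1)) := by
            have : 2 ≤ j + (k - 1) ∨ j + (k-1) < 2 := by omega
            rcases this with h | h
            · calc 2 * k = k * 2 := by ring
                _ ≤ k * (j + (k-1)) := Nat.mul_le_mul_left _ h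
            · -- j + (k-1) ≤ 1: j = 1, k = 1: then n = 2 < 3 contradiction
              exfalso; omega
          omega
      omega
  omega



lemma AR2 (m : ℕ) (hm : 3 ≤ m) :
    2 * m - 2 + (m - 5).choose 2 ≤ max (3 * m - 2) ((m - 1).choose 2 + 1) := by
  rcases le_or_gt m 5 with h | h
  · have h5 : m - 5 = 0 := by omega
    rw [h5]
    apply le_max_of_le_left
    have : (0 : ℕ).choose 2 = 0 := rfl
    omega
  · apply le_max_of_le_right
    obtain ⟨a, rfl⟩ : ∃ a, m = a + 6 := ⟨m - 6, by omega⟩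
    have h1 := two_mul_choose_two (a + 6 - 5)
    have h2 := two_mul_choose_two (a + 6 - 1)
    have e1 : a + 6 - 5 = a + 1 := by omega
    have e2 : a + 6 - 1 = a + 5 := by omega
    rw [e1] at h1; rw [e2] at h2
    have h1' : 2 * (a+1).choose 2 = (a+1) * a := by rw [h1]; congr 1 <;> omega
    have h2' : 2 * (a+5).choose 2 = (a+5) * (a+4) := by rw [h2]; congr 1 <;> omega
    have e3 : 2 * (a + 6) - 2 = 2 * a + 10 := by omega
    have key : (a+1) * a + 2 * (2 * a + 10) ≤ (a+5) * (a+4) + 2 := by nlinarith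
    have k2 : 2 * ((a+1).choose 2) + 2 * (2 * a + 10) ≤ 2 * ((a+5).choose 2) + 2 := by
      rw [h1', h2']; linarith [key]
    rw [e1, e2]
    omega

lemma AR3 (m : ℕ) (hm : 3 ≤ m) :
    m + 4 + (m - 4).choose 2 ≤ max (3 * m - 2) ((m - 1).choose 2 + 1) := by
  rcases le_or_gt m 5 with h | h
  · have h4 : (m - 4).choose 2 = 0 := by
      interval_cases m <;> rfl
    rw [h4]
    exact le_max_of_le_left (by omega)
  · apply le_max_of_le_right
    obtain ⟨a, rfl⟩ : ∃ a, m = a + 6 := ⟨m - 6, by omega⟩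
    have h1 := two_mul_choose_two (a + 6 - 4)
    have h2 := two_mul_choose_two (a + 6 - 1)
    have e1 : a + 6 - 4 = a + 2 := by omega
    have e2 : a + 6 - 1 = a + 5 := by omega
    rw [e1] at h1; rw [e2] at h2
    have h1' : 2 * (a+2).choose 2 = (a+2) * (a+1) := by rw [h1]; congr 1 <;> omega
    have h2' : 2 * (a+5).choose 2 = (a+5) * (a+4) := by rw [h2]; congr 1 <;> omega
    have key : (a+2) * (a+1) + 2 * (a + 6 + 4) ≤ (a+5) * (a+4) + 2 := by nlinarith
    have k2 : 2 * ((a+2).choose 2) + 2 * (a + 6 + 4) ≤ 2 * ((a+5).choose 2) + 2 := by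
      rw [h1', h2']; linarith [key]
    rw [e1, e2]
    omega


lemma split2 (E : Finset ℕ) (hE : E.card = 2) (p : ℕ) (hp : p ∈ E) :
    ∃ x, x ≠ p ∧ x ∈ E ∧ E = {p, x} := by
  have h1 : (E.erase p).card = 1 := by rw [Finset.card_erase_of_mem hp, hE]
  obtain ⟨x, hxeq⟩ := Finset.card_eq_one.mp h1
  have hx : x ∈ E.erase p := hxeq ▸ (by simp)
  refine ⟨x, Finset.ne_of_mem_erase hx, Finset.mem_of_mem_erase hx, ?_⟩
  have h2 := Finset.insert_erase hp
  rw [hxeq] at h2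
  exact h2.symm

/-- An intersecting family of 2-sets inside `V` has at most `max (|V|-1) 3` members. -/
lemma intersecting_pairs_card (V : Finset ℕ) (E : Finset (Finset ℕ))
    (hE : ∀ e ∈ E, e.card = 2 ∧ e ⊆ V)
    (hint : ∀ e ∈ E, ∀ e' ∈ E, (e ∩ e').Nonempty) :
    E.card ≤ max (V.card - 1) 3 := by
  rcases Finset.eq_empty_or_nonempty E with rfl | ⟨e0, he0⟩
  · simp
  obtain ⟨a, b, hab, he0ab⟩ := Finset.card_eq_two.mp (hE e0 he0).1
  have haE : a ∈ e0 := he0ab ▸ (by simp)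
  have hbE : b ∈ e0 := he0ab ▸ (by simp)
  have key : ∀ v : ℕ, v ∈ V → (∀ e ∈ E, v ∈ e) → E.card ≤ max (V.card - 1) 3 := by
    intro v hvV hall
    apply le_max_of_le_left
    have himg : E.card = (E.image (fun e => e.erase v)).card := by
      rw [Finset.card_image_of_injOn]
      intro u hu w hw h
      dsimp only at h
      rw [← Finset.insert_erase (hall u (Finset.mem_coe.mp hu)),
        ← Finset.insert_erase (hall w (Finset.mem_coe.mp hw)), h]
    rw [himg]
    have hsub : E.image (fun e => e.erase v) ⊆ (V.erase v).powersetCard 1 := by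
      intro z hz
      obtain ⟨e, he, rfl⟩ := Finset.mem_image.mp hz
      rw [Finset.mem_powersetCard]
      refine ⟨fun u hu => Finset.mem_erase.mpr ⟨Finset.ne_of_mem_erase hu,
        (hE e he).2 (Finset.mem_of_mem_erase hu)⟩, ?_⟩
      rw [Finset.card_erase_of_mem (hall e he), (hE e he).1]
    calc (E.image _).card ≤ ((V.erase v).powersetCard 1).card := Finset.card_le_card hsub
      _ = (V.erase v).card.choose 1 := Finset.card_powersetCard 1 _
      _ = V.card - 1 := by rw [Nat.choose_one_right, Finset.card_erase_of_mem hvV]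
  by_cases hA : ∀ e ∈ E, a ∈ e
  · exact key a ((hE e0 he0).2 haE) hA
  by_cases hB : ∀ e ∈ E, b ∈ e
  · exact key b ((hE e0 he0).2 hbE) hB
  apply le_max_of_le_right
  push_neg at hA hB
  obtain ⟨e1, he1, ha1⟩ := hA
  obtain ⟨e2, he2, hb2⟩ := hB
  have hb1 : b ∈ e1 := by
    obtain ⟨u, hu⟩ := hint e1 he1 e0 he0
    rw [Finset.mem_inter, he0ab] at hu
    rcases Finset.mem_insert.mp hu.2 with rfl | h
    · exact absurd hu.1 ha1
    · rw [Finset.mem_singleton] at h; exact h ▸ hu.1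
  have ha2 : a ∈ e2 := by
    obtain ⟨u, hu⟩ := hint e2 he2 e0 he0
    rw [Finset.mem_inter, he0ab] at hu
    rcases Finset.mem_insert.mp hu.2 with rfl | h
    · exact hu.1
    · rw [Finset.mem_singleton] at h
      exact absurd (h ▸ hu.1) hb2
  obtain ⟨c, hcb, hce1, he1eq⟩ := split2 e1 (hE e1 he1).1 b hb1
  obtain ⟨d, hda, hde2, he2eq⟩ := split2 e2 (hE e2 he2).1 a ha2
  have hca : c ≠ a := fun h => ha1 (h ▸ hce1)
  have hdb : d ≠ b := fun h => hb2 (h ▸ hde2)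
  have hcd : c = d := by
    obtain ⟨u, hu⟩ := hint e1 he1 e2 he2
    rw [Finset.mem_inter, he1eq, he2eq] at hu
    simp only [Finset.mem_insert, Finset.mem_singleton] at hu
    obtain ⟨h1 | h1, h2 | h2⟩ := hu
    · exact absurd (h1.symm.trans h2).symm hab
    · exact absurd (h2.symm.trans h1) hdb
    · exact absurd (h1.symm.trans h2) hca
    · exact h1.symm.trans h2
  subst hcd
  -- every e ∈ E is inside {a,b,c}
  have habc : ∀ e ∈ E, e ⊆ ({a, b, c} : Finset ℕ) := by
    intro e he
    by_contra hnot
    obtain ⟨u, hue, hu3⟩ := Finset.not_subset.mp hnot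
    simp only [Finset.mem_insert, Finset.mem_singleton, not_or] at hu3
    obtain ⟨hua, hub, huc⟩ := hu3
    obtain ⟨z, hzu, hze, heeq⟩ := split2 e (hE e he).1 u hue
    have hz0 : z ∈ ({a, b} : Finset ℕ) := by
      obtain ⟨w, hw⟩ := hint e he e0 he0
      rw [Finset.mem_inter, heeq, he0ab] at hw
      rcases Finset.mem_insert.mp hw.1 with rfl | h
      · exact absurd hw.2 (by simp [hua, hub])
      · rw [Finset.mem_singleton] at h; exact h ▸ hw.2
    have hz1 : z ∈ ({b, c} : Finset ℕ) := by
      obtain ⟨w, hw⟩ := hint e he e1 he1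
      rw [Finset.mem_inter, heeq, he1eq] at hw
      rcases Finset.mem_insert.mp hw.1 with rfl | h
      · exact absurd hw.2 (by simp [hub, huc])
      · rw [Finset.mem_singleton] at h; exact h ▸ hw.2
    have hz2 : z ∈ ({a, c} : Finset ℕ) := by
      obtain ⟨w, hw⟩ := hint e he e2 he2
      rw [Finset.mem_inter, heeq, he2eq] at hw
      rcases Finset.mem_insert.mp hw.1 with rfl | h
      · exact absurd hw.2 (by simp [hua, huc])
      · rw [Finset.mem_singleton] at h; exact h ▸ hw.2
    simp only [Finset.mem_insert, Finset.mem_singleton] at hz0 hz1 hz2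
    rcases hz0 with rfl | rfl
    · rcases hz1 with h | h
      · exact hab h
      · exact hca h.symm
    · rcases hz2 with h | h
      · exact hab h.symm
      · exact hdb h.symm
  have hsub : E ⊆ ({a, b, c} : Finset ℕ).powersetCard 2 := by
    intro e he
    rw [Finset.mem_powersetCard]
    exact ⟨habc e he, (hE e he).1⟩
  calc E.card ≤ (({a,b,c} : Finset ℕ).powersetCard 2).card := Finset.card_le_card hsub
    _ = ({a,b,c} : Finset ℕ).card.choose 2 := Finset.card_powersetCard 2 _
    _ ≤ 3 := by
      have : ({a,b,c} : Finset ℕ).card ≤ 3 := by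
        apply le_trans (Finset.card_insert_le _ _)
        exact Nat.succ_le_succ (le_trans (Finset.card_insert_le _ _) (by simp))
      calc ({a,b,c} : Finset ℕ).card.choose 2 ≤ (3).choose 2 := Nat.choose_le_choose 2 this
        _ = 3 := rfl


lemma count_main (S : Finset ℕ) (B : Finset (Finset ℕ)) (Y : Finset ℕ) (x : ℕ)
    (C2 : Finset ℕ) (hC2 : C2.card = 2) (hxC2 : x ∉ C2)
    (hBS : ∀ f ∈ B, f ⊆ S) (hB3 : ∀ f ∈ B, f.card = 3)
    (hYS : Y ⊆ S) (hxY : x ∈ Y)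
    (he2 : insert x C2 ∈ B)
    (hQ : ∀ f ∈ B, (f ∩ insert x C2).Nonempty)
    (avoid : ∀ f1 ∈ B, ∀ f2 ∈ B, ∀ p : ℕ, f1 ∩ f2 = {p} → ∀ y ∈ Y, y ∈ f1 ∪ f2 → y = p) :
    Y.card + B.card ≤ max (3 * S.card - 2) ((S.card - 1).choose 2 + 1) := by
  classical
  set m := S.card with hm
  have hxS : x ∈ S := hYS hxY
  have hYm : Y.card ≤ m := Finset.card_le_card hYS
  have he2card : (insert x C2).card = 3 := by
    rw [Finset.card_insert_of_notMem hxC2, hC2]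
  have hm3 : 3 ≤ m := he2card ▸ Finset.card_le_card (hBS _ he2)
  -- cross rule
  have cross : ∀ f ∈ B, x ∈ f → ∀ g ∈ B, x ∉ g → (f ∩ g).card ≠ 1 := by
    intro f hf hxf g hg hxg hcard
    obtain ⟨w, hw⟩ := Finset.card_eq_one.mp hcard
    have hxw := avoid f hf g hg w hw x hxY (Finset.mem_union_left _ hxf)
    have hwg : w ∈ g := (Finset.mem_inter.mp (hw ▸ Finset.mem_singleton_self w)).2
    exact hxg (hxw ▸ hwg)
  -- book structure for edges not containing x
  have book : ∀ g ∈ B, x ∉ g → C2 ⊆ g := by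
    intro g hg hxg
    have h1 : (insert x C2) ∩ g = C2 ∩ g := Finset.insert_inter_of_notMem hxg
    have h2 : (C2 ∩ g).Nonempty := by
      have := hQ g hg
      rwa [Finset.inter_comm, h1] at this
    have h3 : (C2 ∩ g).card ≠ 1 := by
      have := cross (insert x C2) he2 (Finset.mem_insert_self _ _) g hg hxg
      rwa [h1] at this
    have h4 : (C2 ∩ g).card ≤ 2 := hC2 ▸ Finset.card_le_card Finset.inter_subset_left
    have h6 : C2 ∩ g = C2 := by
      apply Finset.eq_of_subset_of_card_le Finset.inter_subset_left
      have := Finset.card_pos.mpr h2; omega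
    intro u hu
    exact (Finset.mem_inter.mp (h6.symm ▸ hu)).2
  -- partition
  set Bx := B.filter (fun f => x ∈ f) with hBxdef
  set Bcd := B.filter (fun f => x ∉ f) with hBcddef
  have hsplit : Bx.card + Bcd.card = B.card :=
    Finset.card_filter_add_card_filter_not (p := fun f => x ∈ f)
  set Lx := Bx.image (fun f => f.erase x) with hLxdef
  have hLxmem : ∀ e ∈ Lx, e.card = 2 ∧ e ⊆ S.erase x ∧ x ∉ e ∧ insert x e ∈ B := by
    intro e he
    obtain ⟨f, hf, rfl⟩ := Finset.mem_image.mp he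
    obtain ⟨hfB, hxf⟩ := Finset.mem_filter.mp hf
    refine ⟨?_, ?_, Finset.notMem_erase _ _, ?_⟩
    · rw [Finset.card_erase_of_mem hxf, hB3 f hfB]
    · intro u hu
      exact Finset.mem_erase.mpr ⟨Finset.ne_of_mem_erase hu,
        hBS f hfB (Finset.mem_of_mem_erase hu)⟩
    · rwa [Finset.insert_erase hxf]
  have hLxcard : Lx.card = Bx.card := by
    rw [hLxdef, Finset.card_image_of_injOn]
    intro u hu w hw h
    dsimp only at h
    have hu' : x ∈ u := (Finset.mem_filter.mp (Finset.mem_coe.mp hu)).2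
    have hw' : x ∈ w := (Finset.mem_filter.mp (Finset.mem_coe.mp hw)).2
    rw [← Finset.insert_erase hu', ← Finset.insert_erase hw', h]
  -- tips
  set tipf : Finset ℕ → ℕ := fun g => (g \ C2).sum id with htipf
  have tipspec : ∀ g ∈ Bcd, g = insert (tipf g) C2 ∧ tipf g ∉ C2 ∧ tipf g ∈ S.erase x := by
    intro g hg
    obtain ⟨hgB, hxg⟩ := Finset.mem_filter.mp hg
    have hsub := book g hgB hxg
    have hcard : (g \ C2).card = 1 := by
      rw [Finset.card_sdiff_of_subset hsub, hB3 g hgB, hC2]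
    obtain ⟨t, ht⟩ := Finset.card_eq_one.mp hcard
    have htg : t ∈ g \ C2 := ht ▸ Finset.mem_singleton_self t
    have htval : tipf g = t := by
      rw [htipf]; dsimp only; rw [ht, Finset.sum_singleton]; rfl
    have htC2 : t ∉ C2 := (Finset.mem_sdiff.mp htg).2
    have htinS : t ∈ S.erase x := by
      refine Finset.mem_erase.mpr ⟨?_, hBS g hgB (Finset.mem_sdiff.mp htg).1⟩
      intro h; exact hxg (h ▸ (Finset.mem_sdiff.mp htg).1)
    rw [htval]
    refine ⟨?_, htC2, htinS⟩
    have hsub2 : insert t C2 ⊆ g := by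
      intro u hu
      rcases Finset.mem_insert.mp hu with rfl | hu'
      · exact (Finset.mem_sdiff.mp htg).1
      · exact hsub hu'
    have hc2 : (insert t C2).card = 3 := by
      rw [Finset.card_insert_of_notMem htC2, hC2]
    exact (Finset.eq_of_subset_of_card_le hsub2 (by rw [hB3 g hgB, hc2])).symm
  have tipinj : Set.InjOn tipf ↑Bcd := by
    intro u hu w hw h
    rw [(tipspec u (Finset.mem_coe.mp hu)).1, (tipspec w (Finset.mem_coe.mp hw)).1, h]
  have hBcdcard : Bcd.card = (Bcd.image tipf).card :=
    (Finset.card_image_of_injOn tipinj).symm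
  have hBcdle : Bcd.card ≤ m - 3 := by
    rw [hBcdcard]
    have hsub : Bcd.image tipf ⊆ S \ (insert x C2) := by
      intro t ht
      obtain ⟨g, hg, rfl⟩ := Finset.mem_image.mp ht
      obtain ⟨h1, h2, h3⟩ := tipspec g hg
      rw [Finset.mem_sdiff]
      refine ⟨Finset.mem_of_mem_erase h3, ?_⟩
      intro hmem
      rcases Finset.mem_insert.mp hmem with h | h
      · exact (Finset.ne_of_mem_erase h3) h
      · exact h2 h
    calc (Bcd.image tipf).card ≤ (S \ insert x C2).card := Finset.card_le_card hsub
      _ = m - 3 := by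
        rw [Finset.card_sdiff_of_subset (hBS _ he2), he2card]
  -- main case split
  by_cases hcd0 : Bcd = ∅
  · -- star case
    have hBtot : B.card = Lx.card := by
      rw [hLxcard]; rw [hcd0] at hsplit; simpa using hsplit.symm
    by_cases hpair : ∃ f1, f1 ∈ B ∧ x ∈ f1 ∧ ∃ f2, f2 ∈ B ∧ x ∈ f2 ∧ f1 ∩ f2 = {x}
    · obtain ⟨f1, hf1B, hxf1, f2, hf2B, hxf2, h12⟩ := hpair
      have hm5 : 5 ≤ m := by
        have hu5 : (f1 ∪ f2).card = 5 := by
          have := Finset.card_union_add_card_inter f1 f2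
          rw [h12, hB3 f1 hf1B, hB3 f2 hf2B] at this
          simpa using this
        calc 5 = (f1 ∪ f2).card := hu5.symm
          _ ≤ m := Finset.card_le_card (Finset.union_subset (hBS f1 hf1B) (hBS f2 hf2B))
      -- Y-isolation
      have yiso : ∀ y ∈ Y.erase x, ∀ g ∈ B, x ∈ g → y ∉ g := by
        intro y hy g hg hxg hyg
        have hyx : y ≠ x := Finset.ne_of_mem_erase hy
        have hyY : y ∈ Y := Finset.mem_of_mem_erase hy
        by_cases h1 : g ∩ f1 = {x}
        · exact hyx (avoid g hg f1 hf1B x h1 y hyY (Finset.mem_union_left _ hyg))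
        by_cases h2 : g ∩ f2 = {x}
        · exact hyx (avoid g hg f2 hf2B x h2 y hyY (Finset.mem_union_left _ hyg))
        have hxg1 : ({x} : Finset ℕ) ⊆ g ∩ f1 := by
          simp [Finset.singleton_subset_iff, hxg, hxf1]
        have hxg2 : ({x} : Finset ℕ) ⊆ g ∩ f2 := by
          simp [Finset.singleton_subset_iff, hxg, hxf2]
        obtain ⟨s1, hs1, hs1x⟩ := Finset.exists_of_ssubset
          (lt_of_le_of_ne hxg1 (fun h => h1 h.symm))
        obtain ⟨s2, hs2, hs2x⟩ := Finset.exists_of_ssubset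
          (lt_of_le_of_ne hxg2 (fun h => h2 h.symm))
        rw [Finset.mem_singleton] at hs1x hs2x
        obtain ⟨hs1g, hs1f⟩ := Finset.mem_inter.mp hs1
        obtain ⟨hs2g, hs2f⟩ := Finset.mem_inter.mp hs2
        have hs12 : s1 ≠ s2 := by
          intro h
          apply hs1x
          have : s1 ∈ f1 ∩ f2 := Finset.mem_inter.mpr ⟨hs1f, h ▸ hs2f⟩
          rw [h12, Finset.mem_singleton] at this; exact this
        have hgeq : g = {x, s1, s2} := by
          symm
          apply Finset.eq_of_subset_of_card_le
          · intro u hu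
            rcases Finset.mem_insert.mp hu with rfl | hu'
            · exact hxg
            rcases Finset.mem_insert.mp hu' with rfl | hu''
            · exact hs1g
            · rw [Finset.mem_singleton] at hu''; exact hu'' ▸ hs2g
          · rw [hB3 g hg]
            rw [Finset.card_insert_of_notMem, Finset.card_insert_of_notMem, Finset.card_singleton]
            · rw [Finset.mem_singleton]; exact hs12
            · intro hmem
              rcases Finset.mem_insert.mp hmem with h | h
              · exact hs1x h.symm
              · rw [Finset.mem_singleton] at h; exact hs2x h.symm
        have hysub : y ∈ f1 ∪ f2 := by
          have : y ∈ ({x, s1, s2} : Finset ℕ) := hgeq ▸ hyg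
          rcases Finset.mem_insert.mp this with rfl | h
          · exact absurd rfl hyx
          rcases Finset.mem_insert.mp h with rfl | h'
          · exact Finset.mem_union_left _ hs1f
          · rw [Finset.mem_singleton] at h'; exact h' ▸ Finset.mem_union_right _ hs2f
        exact hyx (avoid f1 hf1B f2 hf2B x h12 y hyY hysub)
      set k := (Y.erase x).card with hk
      have hYk : Y.card = k + 1 := by
        rw [hk, Finset.card_erase_of_mem hxY]
        have : 1 ≤ Y.card := Finset.card_pos.mpr ⟨x, hxY⟩
        omega
      have hYsubS : Y.erase x ⊆ S.erase x := by
        intro y hy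
        exact Finset.mem_erase.mpr ⟨Finset.ne_of_mem_erase hy,
          hYS (Finset.mem_of_mem_erase hy)⟩
      have hkle : k ≤ m - 1 := by
        calc k ≤ (S.erase x).card := Finset.card_le_card hYsubS
          _ = m - 1 := by rw [Finset.card_erase_of_mem hxS]
      have hLxsub : Lx ⊆ ((S.erase x) \ (Y.erase x)).powersetCard 2 := by
        intro e he
        rw [Finset.mem_powersetCard]
        obtain ⟨hec, hes, hex, heB⟩ := hLxmem e he
        refine ⟨?_, hec⟩
        intro u hu
        rw [Finset.mem_sdiff]
        refine ⟨hes hu, ?_⟩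
        intro huY
        exact yiso u huY (insert x e) heB (Finset.mem_insert_self _ _)
          (Finset.mem_insert_of_mem hu)
      have hLxle : Lx.card ≤ (m - 1 - k).choose 2 := by
        calc Lx.card ≤ (((S.erase x) \ (Y.erase x)).powersetCard 2).card :=
              Finset.card_le_card hLxsub
          _ = ((S.erase x) \ (Y.erase x)).card.choose 2 := Finset.card_powersetCard 2 _
          _ = (m - 1 - k).choose 2 := by
              rw [Finset.card_sdiff_of_subset hYsubS, Finset.card_erase_of_mem hxS]
      apply le_max_of_le_right
      calc Y.card + B.card = (k + 1) + Lx.card := by rw [hYk, hBtot]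
        _ ≤ (k + 1) + (m - 1 - k).choose 2 := by omega
        _ = (k + (m - 1 - k).choose 2) + 1 := by ring
        _ ≤ (m - 1).choose 2 + 1 := by
            have := AR1 (n := m - 1) (k := k) (by omega) hkle
            omega
    · -- star, no pair at x : link is intersecting
      have hint : ∀ e ∈ Lx, ∀ e' ∈ Lx, (e ∩ e').Nonempty := by
        intro e he e' he'
        by_contra hemp
        rw [Finset.not_nonempty_iff_eq_empty] at hemp
        apply hpair
        refine ⟨insert x e, (hLxmem e he).2.2.2, Finset.mem_insert_self _ _,
          insert x e', (hLxmem e' he').2.2.2, Finset.mem_insert_self _ _, ?_⟩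
        ext u
        simp only [Finset.mem_inter, Finset.mem_insert, Finset.mem_singleton]
        constructor
        · rintro ⟨h1 | h1, h2 | h2⟩
          · exact h1
          · exact h1
          · exact h2
          · exfalso
            have : u ∈ e ∩ e' := Finset.mem_inter.mpr ⟨h1, h2⟩
            rw [hemp] at this; exact absurd this (Finset.notMem_empty u)
        · rintro rfl; exact ⟨Or.inl rfl, Or.inl rfl⟩
      have hcard := intersecting_pairs_card (S.erase x) Lx
        (fun e he => ⟨(hLxmem e he).1, (hLxmem e he).2.1⟩) hint
      rw [Finset.card_erase_of_mem hxS] at hcard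
      apply le_max_of_le_left
      have : Lx.card ≤ max (m - 1 - 1) 3 := hcard
      have hY' : Y.card ≤ m := hYm
      rw [hBtot]
      rcases max_cases (m - 1 - 1) 3 with ⟨heq, _⟩ | ⟨heq, _⟩ <;> omega
  · -- Bcd nonempty
    obtain ⟨g0, hg0⟩ := Finset.nonempty_of_ne_empty hcd0
    by_cases hcd1 : Bcd.card = 1
    · -- exactly one tip
      obtain ⟨hg0B, hxg0⟩ := Finset.mem_filter.mp hg0
      have hclass : ∀ e ∈ Lx, e ∩ g0 = ∅ ∨ e ⊆ g0 := by
        intro e he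
        obtain ⟨hec, hes, hex, heB⟩ := hLxmem e he
        have hcr := cross (insert x e) heB (Finset.mem_insert_self _ _) g0 hg0B hxg0
        have hie : (insert x e) ∩ g0 = e ∩ g0 := Finset.insert_inter_of_notMem hxg0
        rw [hie] at hcr
        have hle : (e ∩ g0).card ≤ 2 := hec ▸ Finset.card_le_card Finset.inter_subset_left
        interval_cases h : (e ∩ g0).card
        · left; exact Finset.card_eq_zero.mp h
        · exact absurd rfl hcr
        · right
          have : e ∩ g0 = e := Finset.eq_of_subset_of_card_le Finset.inter_subset_left
            (by omega)
          rw [← this]; exact Finset.inter_subset_right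
      have hg0sub : g0 ⊆ S.erase x := by
        intro u hu
        exact Finset.mem_erase.mpr ⟨fun h => hxg0 (h ▸ hu), hBS g0 hg0B hu⟩
      have hLxsub : Lx ⊆ g0.powersetCard 2 ∪ ((S.erase x) \ g0).powersetCard 2 := by
        intro e he
        rcases hclass e he with h | h
        · apply Finset.mem_union_right
          rw [Finset.mem_powersetCard]
          refine ⟨?_, (hLxmem e he).1⟩
          intro u hu
          rw [Finset.mem_sdiff]
          refine ⟨(hLxmem e he).2.1 hu, ?_⟩
          intro hug
          have : u ∈ e ∩ g0 := Finset.mem_inter.mpr ⟨hu, hug⟩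
          rw [h] at this; exact absurd this (Finset.notMem_empty u)
        · exact Finset.mem_union_left _ (Finset.mem_powersetCard.mpr ⟨h, (hLxmem e he).1⟩)
      have hLxle : Lx.card ≤ 3 + (m - 4).choose 2 := by
        calc Lx.card ≤ (g0.powersetCard 2 ∪ ((S.erase x) \ g0).powersetCard 2).card :=
              Finset.card_le_card hLxsub
          _ ≤ (g0.powersetCard 2).card + (((S.erase x) \ g0).powersetCard 2).card :=
              Finset.card_union_le _ _
          _ = g0.card.choose 2 + ((S.erase x) \ g0).card.choose 2 := by
              rw [Finset.card_powersetCard, Finset.card_powersetCard]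
          _ = 3 + (m - 4).choose 2 := by
              have h34 : m - 1 - 3 = m - 4 := by omega
              rw [hB3 g0 hg0B, Finset.card_sdiff_of_subset hg0sub, Finset.card_erase_of_mem hxS,
                hB3 g0 hg0B, h34]
              congr 1
      calc Y.card + B.card = Y.card + (Bx.card + Bcd.card) := by rw [hsplit]
        _ = Y.card + Lx.card + 1 := by rw [hLxcard, hcd1]; ring
        _ ≤ m + (3 + (m - 4).choose 2) + 1 := by omega
        _ = m + 4 + (m - 4).choose 2 := by ring
        _ ≤ max (3 * m - 2) ((m - 1).choose 2 + 1) := AR3 m hm3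
    · -- at least two tips
      have hτ2 : 2 ≤ Bcd.card := by
        have : Bcd.card ≠ 0 := fun h => hcd0 (Finset.card_eq_zero.mp h)
        omega
      obtain ⟨g1, hg1, g2, hg2, hg12⟩ := Finset.one_lt_card.mp hτ2
      have ht12 : tipf g1 ≠ tipf g2 := by
        intro h
        apply hg12
        rw [(tipspec g1 hg1).1, (tipspec g2 hg2).1, h]
      set TipS := Bcd.image tipf with hTipS
      have hclass : ∀ e ∈ Lx, e = C2 ∨ (e ∩ C2 = ∅ ∧ ∀ g ∈ Bcd, tipf g ∉ e) := by
        intro e he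
        obtain ⟨hec, hes, hex, heB⟩ := hLxmem e he
        have crossg : ∀ g ∈ Bcd, (e ∩ g).card ≠ 1 := by
          intro g hg
          obtain ⟨hgB, hxg⟩ := Finset.mem_filter.mp hg
          have hcr := cross (insert x e) heB (Finset.mem_insert_self _ _) g hgB hxg
          rwa [Finset.insert_inter_of_notMem hxg] at hcr
        have hinterg : ∀ g ∈ Bcd, e ∩ g = (e ∩ C2) ∪ (e ∩ {tipf g}) := by
          intro g hg
          conv_lhs => rw [(tipspec g hg).1]
          rw [Finset.insert_eq, Finset.inter_union_distrib_left, Finset.union_comm]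
        have hC2le : (e ∩ C2).card ≤ 2 := hec ▸ Finset.card_le_card Finset.inter_subset_left
        interval_cases hC2c : (e ∩ C2).card
        · -- e ∩ C2 = ∅
          right
          have hC2e : e ∩ C2 = ∅ := Finset.card_eq_zero.mp hC2c
          refine ⟨hC2e, ?_⟩
          intro g hg hte
          have h1 : e ∩ g = {tipf g} := by
            rw [hinterg g hg, hC2e, Finset.empty_union,
              Finset.inter_eq_right.mpr (by simpa using hte)]
          have := crossg g hg
          rw [h1] at this
          simp at this
        · -- |e∩C2| = 1 : impossible
          exfalso
          have hdj : ∀ g ∈ Bcd, Disjoint (e ∩ C2) (e ∩ {tipf g}) := by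
            intro g hg
            apply Finset.disjoint_left.mpr
            intro u hu1 hu2
            have h1 : u ∈ C2 := (Finset.mem_inter.mp hu1).2
            have h2 : u = tipf g := by
              have := (Finset.mem_inter.mp hu2).2
              simpa using this
            exact (tipspec g hg).2.1 (h2 ▸ h1)
          have htin : ∀ g ∈ Bcd, tipf g ∈ e := by
            intro g hg
            by_contra hnot
            have h0 : e ∩ {tipf g} = ∅ := by
              rw [Finset.eq_empty_iff_forall_notMem]
              intro u hu
              obtain ⟨h1, h2⟩ := Finset.mem_inter.mp hu
              rw [Finset.mem_singleton] at h2
              exact hnot (h2 ▸ h1)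
            have := crossg g hg
            rw [hinterg g hg, h0, Finset.union_empty] at this
            exact this hC2c
          have ht1e := htin g1 hg1
          have ht2e := htin g2 hg2
          -- e = {tipf g1, tipf g2}, but then e ∩ C2 = ∅
          have hesub : ({tipf g1, tipf g2} : Finset ℕ) ⊆ e := by
            intro u hu
            rcases Finset.mem_insert.mp hu with rfl | hu'
            · exact ht1e
            · rw [Finset.mem_singleton] at hu'; exact hu' ▸ ht2e
          have hecard : ({tipf g1, tipf g2} : Finset ℕ).card = 2 := by
            rw [Finset.card_insert_of_notMem (by simpa using ht12), Finset.card_singleton]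
          have heeq : e = {tipf g1, tipf g2} :=
            (Finset.eq_of_subset_of_card_le hesub (by omega)).symm
          have : (e ∩ C2).card = 0 := by
            rw [Finset.card_eq_zero, Finset.eq_empty_iff_forall_notMem]
            intro u hu
            obtain ⟨h1, h2⟩ := Finset.mem_inter.mp hu
            rw [heeq] at h1
            rcases Finset.mem_insert.mp h1 with rfl | h1'
            · exact (tipspec g1 hg1).2.1 h2
            · rw [Finset.mem_singleton] at h1'
              exact (tipspec g2 hg2).2.1 (h1' ▸ h2)
          omega
        · -- |e∩C2| = 2 : e = C2
          left
          have h1 : e ∩ C2 = e := Finset.eq_of_subset_of_card_le Finset.inter_subset_left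
            (by omega)
          have h2 : e ⊆ C2 := h1 ▸ Finset.inter_subset_right
          exact Finset.eq_of_subset_of_card_le h2 (by omega)
      -- count
      have hTsub : C2 ∪ TipS ⊆ S.erase x := by
        intro u hu
        rcases Finset.mem_union.mp hu with h | h
        · refine Finset.mem_erase.mpr ⟨fun hh => hxC2 (hh ▸ h), ?_⟩
          exact hBS _ he2 (Finset.mem_insert_of_mem h)
        · obtain ⟨g, hg, rfl⟩ := Finset.mem_image.mp h
          exact (tipspec g hg).2.2
      have hdisjT : Disjoint C2 TipS := by
        apply Finset.disjoint_left.mpr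
        intro u hu1 hu2
        obtain ⟨g, hg, rfl⟩ := Finset.mem_image.mp hu2
        exact (tipspec g hg).2.1 hu1
      have hLxsub : Lx ⊆ insert C2 (((S.erase x) \ (C2 ∪ TipS)).powersetCard 2) := by
        intro e he
        rcases hclass e he with rfl | ⟨h1, h2⟩
        · exact Finset.mem_insert_self _ _
        · apply Finset.mem_insert_of_mem
          rw [Finset.mem_powersetCard]
          refine ⟨?_, (hLxmem e he).1⟩
          intro u hu
          rw [Finset.mem_sdiff]
          refine ⟨(hLxmem e he).2.1 hu, ?_⟩
          intro huT
          rcases Finset.mem_union.mp huT with h | h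
          · have : u ∈ e ∩ C2 := Finset.mem_inter.mpr ⟨hu, h⟩
            rw [h1] at this; exact absurd this (Finset.notMem_empty u)
          · obtain ⟨g, hg, hgu⟩ := Finset.mem_image.mp h
            exact h2 g hg (hgu ▸ hu)
      have hcardT : (C2 ∪ TipS).card = 2 + TipS.card := by
        rw [Finset.card_union_of_disjoint hdisjT, hC2]
      have hτS : TipS.card = Bcd.card := Finset.card_image_of_injOn tipinj
      have hLxle : Lx.card ≤ 1 + (m - 3 - Bcd.card).choose 2 := by
        calc Lx.card ≤ (insert C2 (((S.erase x) \ (C2 ∪ TipS)).powersetCard 2)).card :=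
              Finset.card_le_card hLxsub
          _ ≤ 1 + (((S.erase x) \ (C2 ∪ TipS)).powersetCard 2).card := by
              have := Finset.card_insert_le C2 (((S.erase x) \ (C2 ∪ TipS)).powersetCard 2)
              omega
          _ = 1 + ((S.erase x) \ (C2 ∪ TipS)).card.choose 2 := by
              rw [Finset.card_powersetCard]
          _ = 1 + (m - 3 - Bcd.card).choose 2 := by
              rw [Finset.card_sdiff_of_subset hTsub, Finset.card_erase_of_mem hxS, hcardT, hτS]
              congr 2
              omega
      have hmono : (m - 3 - Bcd.card).choose 2 ≤ (m - 5).choose 2 :=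
        Nat.choose_le_choose 2 (by omega)
      calc Y.card + B.card = Y.card + (Bx.card + Bcd.card) := by rw [hsplit]
        _ = Y.card + Lx.card + Bcd.card := by rw [hLxcard]; ring
        _ ≤ m + (1 + (m - 5).choose 2) + (m - 3) := by
            have := hBcdle; omega
        _ ≤ 2 * m - 2 + (m - 5).choose 2 := by omega
        _ ≤ max (3 * m - 2) ((m - 1).choose 2 + 1) := AR2 m hm3


lemma ARS5 (t : ℕ) (ht : 5 ≤ t) : 3 * (t + 3) - 2 ≤ (t + 2).choose 2 + 1 := by
  obtain ⟨a, rfl⟩ : ∃ a, t = a + 5 := ⟨t - 5, by omega⟩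
  have hmul := two_mul_choose_two (a + 7)
  have h71 : a + 7 - 1 = a + 6 := by omega
  rw [h71] at hmul
  have h72 : a + 5 + 2 = a + 7 := by omega
  rw [h72]
  have hfin : 2 * (3 * a + 22) ≤ 2 * ((a + 7).choose 2) + 2 := by nlinarith [hmul]
  omega


open ThreeGraph
/-- Fact `UW0`: with the setup of the paper (`Q` a copy of `P₂` with
vertex set `U` and degree-two vertex `x`, some edge disjoint from `U`, `W = V ∖ U`,
`W₀` the isolated vertices of `H[W]` with `s = |W₀| ≥ 1`, `W₁ = W ∖ W₀`, `H₁` the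
edges meeting both `U` and `W₁`, and `F²₁ = {h ∈ H₁ : |(h ∩ U) ∖ {x}| = 2} ≠ ∅`),
the number of edges of `H[U ∪ W₀]` is bounded as stated. -/
theorem fact_UW0 (n : ℕ) (H : ThreeGraph) (hv : H.verts.card = n)
    (hP : ¬ HasCopy pathP H) (hC : ¬ HasCopy triC H) (hp2k3 : HasCopy p2K3 H)
    (e1 e2 : Finset ℕ) (he1 : e1 ∈ H.edges) (he2 : e2 ∈ H.edges)
    (x : ℕ) (hx : e1 ∩ e2 = {x})
    (U W W0 W1 : Finset ℕ) (H1 F21 HUW0 : Finset (Finset ℕ))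
    (hU : U = e1 ∪ e2)
    (hdisj : ∃ e ∈ H.edges, Disjoint e U)
    (hW : W = H.verts \ U)
    (hW0 : W0 = W.filter (fun v => ∀ e ∈ H.edges, e ⊆ W → v ∉ e))
    (hs : 1 ≤ W0.card)
    (hW1 : W1 = W \ W0)
    (hH1 : H1 = H.edges.filter (fun e => (e ∩ U).Nonempty ∧ (e ∩ W1).Nonempty))
    (hF21 : F21 = H1.filter (fun h => ((h ∩ U) \ {x}).card = 2))
    (hne : F21.Nonempty)
    (hHUW0 : HUW0 = H.edges.filter (fun e => e ⊆ U ∪ W0)) :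
    (W0.card = 1 → HUW0.card ≤ 8) ∧
    (2 ≤ W0.card → W0.card ≤ 4 → HUW0.card ≤ 3 * W0.card + 7) ∧
    (5 ≤ W0.card → HUW0.card ≤ (W0.card + 2).choose 2 + 1) := by
  classical
  subst hU hW hW0 hW1 hH1 hF21 hHUW0
  -- notation
  set U : Finset ℕ := e1 ∪ e2 with hUdef
  set W : Finset ℕ := H.verts \ U with hWdef
  set W0 : Finset ℕ := W.filter (fun v => ∀ e ∈ H.edges, e ⊆ W → v ∉ e) with hW0def
  set W1 : Finset ℕ := W \ W0 with hW1def
  set HUW0 : Finset (Finset ℕ) := H.edges.filter (fun e => e ⊆ U ∪ W0) with hHUW0def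
  set s := W0.card with hsdef
  -- basic facts
  have hxe1 : x ∈ e1 := (Finset.mem_inter.mp (hx ▸ Finset.mem_singleton_self x)).1
  have hxe2 : x ∈ e2 := (Finset.mem_inter.mp (hx ▸ Finset.mem_singleton_self x)).2
  have hxU : x ∈ U := Finset.mem_union_left _ hxe1
  have hU5 : U.card = 5 := by
    have := Finset.card_union_add_card_inter e1 e2
    rw [hx, H.card3 _ he1, H.card3 _ he2] at this
    simpa using this
  have hW0W : W0 ⊆ W := Finset.filter_subset _ _
  have hW0U : Disjoint U W0 := by
    apply Finset.disjoint_left.mpr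
    intro u hu hu0
    have : u ∈ W := hW0W hu0
    rw [hWdef] at this
    exact (Finset.mem_sdiff.mp this).2 hu
  have hUW0card : (U ∪ W0).card = 5 + s := by
    rw [Finset.card_union_of_disjoint hW0U, hU5]
  -- extract h from F21
  obtain ⟨h, hh⟩ := hne
  obtain ⟨hhH1, hT2⟩ := Finset.mem_filter.mp hh
  obtain ⟨hhE, hhU, hhW1⟩ := Finset.mem_filter.mp hhH1
  set T : Finset ℕ := (h ∩ U) \ {x} with hTdef
  obtain ⟨w, hw⟩ := hhW1
  obtain ⟨hwh, hwW1⟩ := Finset.mem_inter.mp hw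
  have hwW : w ∈ W := (Finset.mem_sdiff.mp (hW1def ▸ hwW1)).1
  have hwnW0 : w ∉ W0 := (Finset.mem_sdiff.mp (hW1def ▸ hwW1)).2
  have hwnU : w ∉ U := (Finset.mem_sdiff.mp (hWdef ▸ hwW)).2
  have hTU : T ⊆ U := fun u hu => (Finset.mem_inter.mp (Finset.mem_sdiff.mp hu).1).2
  have hTh : T ⊆ h := fun u hu => (Finset.mem_inter.mp (Finset.mem_sdiff.mp hu).1).1
  have hwT : w ∉ T := fun hc => hwnU (hTU hc)
  have hxT : x ∉ T := fun hc => (Finset.mem_sdiff.mp hc).2 (Finset.mem_singleton_self x)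
  have hheq : h = insert w T := by
    symm
    apply Finset.eq_of_subset_of_card_le
    · intro u hu
      rcases Finset.mem_insert.mp hu with rfl | hu'
      · exact hwh
      · exact hTh hu'
    · rw [H.card3 _ hhE, Finset.card_insert_of_notMem hwT, hT2]
  have hxh : x ∉ h := by
    intro hc
    rw [hheq] at hc
    rcases Finset.mem_insert.mp hc with rfl | hc'
    · exact hwnU hxU
    · exact hxT hc'
  -- extract g
  have hgex : ∃ g ∈ H.edges, g ⊆ W ∧ w ∈ g := by
    have := hwnW0
    rw [hW0def, Finset.mem_filter, not_and] at this
    have h2 := this hwW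
    push_neg at h2
    obtain ⟨g, hg1, hg2, hg3⟩ := h2
    exact ⟨g, hg1, hg2, by simpa using hg3⟩
  obtain ⟨g, hgE, hgW, hwg⟩ := hgex
  have hgU : ∀ u ∈ g, u ∉ U := fun u hu => (Finset.mem_sdiff.mp (hgW hu)).2
  have hgW0 : ∀ u ∈ g, u ∉ W0 := by
    intro u hu hc
    rw [hW0def, Finset.mem_filter] at hc
    exact hc.2 g hgE hgW hu
  have hfg : ∀ f ∈ HUW0, f ∩ g = ∅ := by
    intro f hf
    rw [Finset.eq_empty_iff_forall_notMem]
    intro u hu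
    obtain ⟨huf, hug⟩ := Finset.mem_inter.mp hu
    have : u ∈ U ∪ W0 := (Finset.mem_filter.mp hf).2 huf
    rcases Finset.mem_union.mp this with h' | h'
    · exact hgU u hug h'
    · exact hgW0 u hug h'
  have hwf : ∀ f ∈ HUW0, w ∉ f := by
    intro f hf hc
    have : w ∈ U ∪ W0 := (Finset.mem_filter.mp hf).2 hc
    rcases Finset.mem_union.mp this with h' | h'
    · exact hwnU h'
    · exact hwnW0 h'
  have hhg : h ∩ g = {w} := by
    ext u
    simp only [Finset.mem_inter, Finset.mem_singleton]
    constructor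
    · rintro ⟨h1, h2⟩
      rw [hheq] at h1
      rcases Finset.mem_insert.mp h1 with rfl | h1'
      · rfl
      · exact absurd (hTU h1') (hgU u h2)
    · rintro rfl; exact ⟨hwh, hwg⟩
  -- P1 : every edge of HUW0 contains T or is disjoint from it
  have P1 : ∀ f ∈ HUW0, T ⊆ f ∨ f ∩ T = ∅ := by
    intro f hf
    by_contra hcon
    push_neg at hcon
    obtain ⟨hnsub, hne'⟩ := hcon
    have hfE : f ∈ H.edges := (Finset.mem_filter.mp hf).1
    have hle : (f ∩ T).card ≤ 2 := by
        have := Finset.card_le_card (Finset.inter_subset_right : f ∩ T ⊆ T); omega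
    have hpos : 1 ≤ (f ∩ T).card := Finset.card_pos.mpr hne'
    have hne2 : (f ∩ T).card ≠ 2 := by
      intro hc
      apply hnsub
      have : f ∩ T = T := Finset.eq_of_subset_of_card_le Finset.inter_subset_right
        (by omega)
      intro u hu
      exact (Finset.mem_inter.mp (this.symm ▸ hu)).1
    have hcard1 : (f ∩ T).card = 1 := by omega
    obtain ⟨u, hu⟩ := Finset.card_eq_one.mp hcard1
    have hfh : f ∩ h = {u} := by
      ext z
      simp only [Finset.mem_inter, Finset.mem_singleton]
      constructor
      · rintro ⟨h1, h2⟩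
        rw [hheq] at h2
        rcases Finset.mem_insert.mp h2 with rfl | h2'
        · exact absurd h1 (hwf f hf)
        · have : z ∈ f ∩ T := Finset.mem_inter.mpr ⟨h1, h2'⟩
          rw [hu, Finset.mem_singleton] at this; exact this
      · intro hz
        have h5 : z ∈ f ∩ T := by rw [hu, Finset.mem_singleton]; exact hz
        exact ⟨(Finset.mem_inter.mp h5).1, hTh (Finset.mem_inter.mp h5).2⟩
    have huT : u ∈ T := by
      have : u ∈ f ∩ T := hu ▸ Finset.mem_singleton_self u
      exact (Finset.mem_inter.mp this).2
    have huw : u ≠ w := fun hc => hwT (hc ▸ huT)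
    exact hP (hasCopy_pathP_of H f h g hfE hhE hgE u w hfh hhg huw (hfg f hf))
  -- e1, e2 are in HUW0
  have he1M : e1 ∈ HUW0 := Finset.mem_filter.mpr ⟨he1,
    fun u hu => Finset.mem_union_left _ (Finset.mem_union_left _ hu)⟩
  have he2M : e2 ∈ HUW0 := Finset.mem_filter.mpr ⟨he2,
    fun u hu => Finset.mem_union_left _ (Finset.mem_union_right _ hu)⟩
  have hTne : T.Nonempty := Finset.card_pos.mp (by omega)
  -- T is inside e1 or e2
  have hTbranch : T ⊆ e1 ∨ T ⊆ e2 := by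
    rcases P1 e1 he1M with h1 | h1
    · left; exact h1
    rcases P1 e2 he2M with h2 | h2
    · right; exact h2
    exfalso
    obtain ⟨t, ht⟩ := hTne
    rcases Finset.mem_union.mp (hTU ht) with h' | h'
    · rw [Finset.eq_empty_iff_forall_notMem] at h1
      exact h1 t (Finset.mem_inter.mpr ⟨h', ht⟩)
    · rw [Finset.eq_empty_iff_forall_notMem] at h2
      exact h2 t (Finset.mem_inter.mpr ⟨h', ht⟩)
  -- the key lemma, applied to (E, E') = (e1,e2) or (e2,e1)
  have key : ∀ E E', E ∈ H.edges → E' ∈ H.edges → E ∪ E' = U → E ∩ E' = {x} →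
      T ⊆ E → HUW0.card ≤ max (3 * (s + 3) - 2) ((s + 2).choose 2 + 1) ∧
      (s = 1 → HUW0.card ≤ 8) := by
    intro E E' hEH hE'H hEU hEx hTE
    have hxE : x ∈ E := (Finset.mem_inter.mp (hEx ▸ Finset.mem_singleton_self x)).1
    have hxE' : x ∈ E' := (Finset.mem_inter.mp (hEx ▸ Finset.mem_singleton_self x)).2
    have hEeq : E = insert x T := by
      symm
      apply Finset.eq_of_subset_of_card_le
      · intro u hu
        rcases Finset.mem_insert.mp hu with rfl | hu'
        · exact hxE
        · exact hTE hu'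
      · rw [H.card3 _ hEH, Finset.card_insert_of_notMem hxT, hT2]
    set C2 : Finset ℕ := E'.erase x with hC2def
    have hC2card : C2.card = 2 := by
      rw [hC2def, Finset.card_erase_of_mem hxE', H.card3 _ hE'H]
    have hxC2 : x ∉ C2 := Finset.notMem_erase _ _
    have hE'eq : E' = insert x C2 := (Finset.insert_erase hxE').symm
    have hTC2 : ∀ u ∈ C2, u ∉ T := by
      intro u hu hc
      have h1 : u ∈ E' := Finset.mem_of_mem_erase hu
      have h2 : u ∈ E := hTE hc
      have : u ∈ E ∩ E' := Finset.mem_inter.mpr ⟨h2, h1⟩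
      rw [hEx, Finset.mem_singleton] at this
      exact (Finset.ne_of_mem_erase hu) this
    set S : Finset ℕ := (U ∪ W0) \ T with hSdef
    have hTUW0 : T ⊆ U ∪ W0 := fun u hu => Finset.mem_union_left _ (hTU hu)
    have hScard : S.card = s + 3 := by
      rw [hSdef, Finset.card_sdiff_of_subset hTUW0, hUW0card, hT2]
      omega
    -- partition HUW0
    set AA : Finset (Finset ℕ) := HUW0.filter (fun f => T ⊆ f) with hAAdef
    set BB : Finset (Finset ℕ) := HUW0.filter (fun f => ¬ T ⊆ f) with hBBdef
    have hABsplit : AA.card + BB.card = HUW0.card :=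
      Finset.card_filter_add_card_filter_not (p := fun f => T ⊆ f)
    have hBBdisj : ∀ f ∈ BB, f ∩ T = ∅ := by
      intro f hf
      obtain ⟨hf1, hf2⟩ := Finset.mem_filter.mp hf
      rcases P1 f hf1 with h' | h'
      · exact absurd h' hf2
      · exact h'
    have hBBS : ∀ f ∈ BB, f ⊆ S := by
      intro f hf u hu
      rw [hSdef, Finset.mem_sdiff]
      refine ⟨(Finset.mem_filter.mp (Finset.mem_filter.mp hf).1).2 hu, ?_⟩
      intro hc
      have : u ∈ f ∩ T := Finset.mem_inter.mpr ⟨hu, hc⟩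
      rw [hBBdisj f hf] at this
      exact absurd this (Finset.notMem_empty u)
    have hBB3 : ∀ f ∈ BB, f.card = 3 := fun f hf =>
      H.card3 _ (Finset.mem_filter.mp (Finset.mem_filter.mp hf).1).1
    have hBBE : ∀ f ∈ BB, f ∈ H.edges := fun f hf =>
      (Finset.mem_filter.mp (Finset.mem_filter.mp hf).1).1
    -- tips of AA
    set tipT : Finset ℕ → ℕ := fun f => (f \ T).sum id with htipT
    have AAspec : ∀ f ∈ AA, f = insert (tipT f) T ∧ tipT f ∈ S := by
      intro f hf
      obtain ⟨hf1, hf2⟩ := Finset.mem_filter.mp hf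
      have hfE : f ∈ H.edges := (Finset.mem_filter.mp hf1).1
      have hcard : (f \ T).card = 1 := by
        rw [Finset.card_sdiff_of_subset hf2, H.card3 _ hfE, hT2]
      obtain ⟨t, ht⟩ := Finset.card_eq_one.mp hcard
      have htf : t ∈ f \ T := ht ▸ Finset.mem_singleton_self t
      have htval : tipT f = t := by
        rw [htipT]; dsimp only; rw [ht, Finset.sum_singleton]; rfl
      rw [htval]
      constructor
      · symm
        apply Finset.eq_of_subset_of_card_le
        · intro u hu
          rcases Finset.mem_insert.mp hu with rfl | hu'
          · exact (Finset.mem_sdiff.mp htf).1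
          · exact hf2 hu'
        · rw [H.card3 _ hfE, Finset.card_insert_of_notMem (Finset.mem_sdiff.mp htf).2, hT2]
      · rw [hSdef, Finset.mem_sdiff]
        exact ⟨(Finset.mem_filter.mp hf1).2 (Finset.mem_sdiff.mp htf).1,
          (Finset.mem_sdiff.mp htf).2⟩
    set Y : Finset ℕ := AA.image tipT with hYdef
    have hYS : Y ⊆ S := by
      intro y hy
      obtain ⟨f, hf, rfl⟩ := Finset.mem_image.mp hy
      exact (AAspec f hf).2
    have hYcard : Y.card = AA.card := by
      rw [hYdef]
      apply Finset.card_image_of_injOn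
      intro u hu w' hw' hval
      rw [(AAspec u (Finset.mem_coe.mp hu)).1, (AAspec w' (Finset.mem_coe.mp hw')).1, hval]
    have hEM : E ∈ HUW0 := Finset.mem_filter.mpr ⟨hEH, by
      intro u hu
      exact Finset.mem_union_left _ (hEU ▸ Finset.mem_union_left _ hu)⟩
    have hE'M : E' ∈ HUW0 := Finset.mem_filter.mpr ⟨hE'H, by
      intro u hu
      exact Finset.mem_union_left _ (hEU ▸ Finset.mem_union_right _ hu)⟩
    have hEA : E ∈ AA := Finset.mem_filter.mpr ⟨hEM, hTE⟩
    have htipE : tipT E = x := by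
      have hdiff : E \ T = {x} := by
        rw [hEeq]
        ext z
        simp only [Finset.mem_sdiff, Finset.mem_insert, Finset.mem_singleton]
        constructor
        · rintro ⟨h1 | h1, h2⟩
          · exact h1
          · exact absurd h1 h2
        · rintro rfl; exact ⟨Or.inl rfl, hxT⟩
      rw [htipT]; dsimp only; rw [hdiff, Finset.sum_singleton]; rfl
    have hxY : x ∈ Y := by
      rw [hYdef, Finset.mem_image]
      exact ⟨E, hEA, htipE⟩
    have hE'B : insert x C2 ∈ BB := by
      rw [← hE'eq]
      refine Finset.mem_filter.mpr ⟨hE'M, ?_⟩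
      intro hc
      obtain ⟨t, ht⟩ := hTne
      have : t ∈ E ∩ E' := Finset.mem_inter.mpr ⟨hTE ht, hc ht⟩
      rw [hEx, Finset.mem_singleton] at this
      exact hxT (this ▸ ht)
    have hQ : ∀ f ∈ BB, (f ∩ insert x C2).Nonempty := by
      intro f hf
      rw [Finset.nonempty_iff_ne_empty]
      intro hemp
      -- then f ∩ U = ∅, so f ⊆ W0, contradiction with isolation
      have hfU : f ∩ U = ∅ := by
        rw [Finset.eq_empty_iff_forall_notMem]
        intro u hu
        obtain ⟨h1, h2⟩ := Finset.mem_inter.mp hu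
        rw [← hEU] at h2
        rcases Finset.mem_union.mp h2 with h' | h'
        · rw [hEeq] at h'
          rcases Finset.mem_insert.mp h' with rfl | h''
          · rw [Finset.eq_empty_iff_forall_notMem] at hemp
            exact hemp u (Finset.mem_inter.mpr ⟨h1, Finset.mem_insert_self _ _⟩)
          · have : u ∈ f ∩ T := Finset.mem_inter.mpr ⟨h1, h''⟩
            rw [hBBdisj f hf] at this
            exact absurd this (Finset.notMem_empty u)
        · rw [hE'eq] at h'
          rw [Finset.eq_empty_iff_forall_notMem] at hemp
          exact hemp u (Finset.mem_inter.mpr ⟨h1, h'⟩)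
      have hfW0 : f ⊆ W0 := by
        intro u hu
        have h1 : u ∈ U ∪ W0 := (Finset.mem_filter.mp (Finset.mem_filter.mp hf).1).2 hu
        rcases Finset.mem_union.mp h1 with h' | h'
        · exfalso
          have : u ∈ f ∩ U := Finset.mem_inter.mpr ⟨hu, h'⟩
          rw [hfU] at this
          exact absurd this (Finset.notMem_empty u)
        · exact h'
      obtain ⟨u, hu⟩ : f.Nonempty := Finset.card_pos.mp (by rw [hBB3 f hf]; omega)
      have hu0 : u ∈ W0 := hfW0 hu
      rw [hW0def, Finset.mem_filter] at hu0
      exact hu0.2 f (hBBE f hf) (fun z hz => hW0W (hfW0 hz)) hu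
    have avoid : ∀ f1 ∈ BB, ∀ f2 ∈ BB, ∀ p : ℕ, f1 ∩ f2 = {p} →
        ∀ y ∈ Y, y ∈ f1 ∪ f2 → y = p := by
      intro f1 hf1 f2 hf2 p hp y hy hyu
      by_contra hyp
      obtain ⟨fA, hfA, hfAy⟩ := Finset.mem_image.mp (hYdef ▸ hy)
      have hfAeq : fA = insert y T := by rw [← hfAy]; exact (AAspec fA hfA).1
      have hfAE : fA ∈ H.edges := (Finset.mem_filter.mp (Finset.mem_filter.mp hfA).1).1
      have hynotT : y ∉ T := by
        have := (AAspec fA hfA).2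
        rw [hfAy, hSdef, Finset.mem_sdiff] at this
        exact this.2
      have hcase : (y ∈ f1 ∧ y ∉ f2) ∨ (y ∈ f2 ∧ y ∉ f1) := by
        rcases Finset.mem_union.mp hyu with h' | h'
        · by_cases h2 : y ∈ f2
          · exfalso
            have : y ∈ f1 ∩ f2 := Finset.mem_inter.mpr ⟨h', h2⟩
            rw [hp, Finset.mem_singleton] at this
            exact hyp this
          · exact Or.inl ⟨h', h2⟩
        · by_cases h2 : y ∈ f1
          · exfalso
            have : y ∈ f1 ∩ f2 := Finset.mem_inter.mpr ⟨h2, h'⟩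
            rw [hp, Finset.mem_singleton] at this
            exact hyp this
          · exact Or.inr ⟨h', h2⟩
      have hinterA : ∀ f', f' ∈ BB → y ∈ f' → f' ∩ fA = {y} := by
        intro f' hf' hyf'
        rw [hfAeq]
        ext z
        simp only [Finset.mem_inter, Finset.mem_insert, Finset.mem_singleton]
        constructor
        · rintro ⟨h1, rfl | h2⟩
          · rfl
          · exfalso
            have : z ∈ f' ∩ T := Finset.mem_inter.mpr ⟨h1, h2⟩
            rw [hBBdisj f' hf'] at this
            exact absurd this (Finset.notMem_empty z)
        · rintro rfl; exact ⟨hyf', Or.inl rfl⟩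
      have hdisjA : ∀ f', f' ∈ BB → y ∉ f' → f' ∩ fA = ∅ := by
        intro f' hf' hyf'
        rw [hfAeq, Finset.eq_empty_iff_forall_notMem]
        intro z hz
        obtain ⟨h1, h2⟩ := Finset.mem_inter.mp hz
        rcases Finset.mem_insert.mp h2 with rfl | h2'
        · exact hyf' h1
        · have : z ∈ f' ∩ T := Finset.mem_inter.mpr ⟨h1, h2'⟩
          rw [hBBdisj f' hf'] at this
          exact absurd this (Finset.notMem_empty z)
      rcases hcase with ⟨hy1, hy2⟩ | ⟨hy1, hy2⟩
      · -- P-pattern (f2, f1, fA)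
        apply hP
        refine hasCopy_pathP_of H f2 f1 fA (hBBE f2 hf2) (hBBE f1 hf1) hfAE p y
          ?_ (hinterA f1 hf1 hy1) (fun hc => hyp hc.symm) (hdisjA f2 hf2 hy2)
        rw [Finset.inter_comm]; exact hp
      · -- P-pattern (f1, f2, fA)
        apply hP
        exact hasCopy_pathP_of H f1 f2 fA (hBBE f1 hf1) (hBBE f2 hf2) hfAE p y
          hp (hinterA f2 hf2 hy1) (fun hc => hyp hc.symm) (hdisjA f1 hf1 hy2)
    -- apply the counting lemma
    have hmain := count_main S BB Y x C2 hC2card hxC2 hBBS hBB3 hYS hxY hE'B hQ avoid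
    rw [hScard] at hmain
    have htotal : HUW0.card = Y.card + BB.card := by
      rw [hYcard, hABsplit]
    constructor
    · rw [htotal]
      calc Y.card + BB.card ≤ max (3 * (s + 3) - 2) ((s + 3 - 1).choose 2 + 1) := hmain
        _ = max (3 * (s + 3) - 2) ((s + 2).choose 2 + 1) := by
            have h31 : s + 3 - 1 = s + 2 := by omega
            rw [h31]
    · intro hs1
      rw [htotal]
      have hY4 : Y.card ≤ 4 := by
        calc Y.card ≤ S.card := Finset.card_le_card hYS
          _ = 4 := by omega
      have hBB4 : BB.card ≤ 4 := by
        have hsub : BB ⊆ S.powersetCard 3 := by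
          intro f hf
          exact Finset.mem_powersetCard.mpr ⟨hBBS f hf, hBB3 f hf⟩
        calc BB.card ≤ (S.powersetCard 3).card := Finset.card_le_card hsub
          _ = S.card.choose 3 := Finset.card_powersetCard 3 _
          _ = 4 := by
              have h4 : S.card = 4 := by omega
              rw [h4]
              decide
      omega
  -- combine branches
  have hkey : HUW0.card ≤ max (3 * (s + 3) - 2) ((s + 2).choose 2 + 1) ∧
      (s = 1 → HUW0.card ≤ 8) := by
    rcases hTbranch with h' | h'
    · exact key e1 e2 he1 he2 rfl hx h'
    · refine key e2 e1 he2 he1 (Finset.union_comm e2 e1) ?_ h'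
      rw [Finset.inter_comm]; exact hx
  obtain ⟨hkey1, hkey2⟩ := hkey
  refine ⟨hkey2, ?_, ?_⟩
  · -- 2 ≤ s ≤ 4
    intro hs2 hs4
    have hle : (s + 2).choose 2 + 1 ≤ 3 * s + 7 := by
      interval_cases s <;> simp [Nat.choose]
    have h3 : 3 * (s + 3) - 2 = 3 * s + 7 := by omega
    rw [h3] at hkey1
    omega
  · -- s ≥ 5
    intro hs5
    have hle : 3 * (s + 3) - 2 ≤ (s + 2).choose 2 + 1 := ARS5 s hs5
    omega
end
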